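/- arXiv:1706.09052 — 7 statements merged into one kernel-verified Lean document; each statement's English description precedes it below -/
import Mathlib

section
/- If H is a finite simple graph that is a forest (contains no cycle) and contains neither 3P1 nor 2P2 as an induced subgraph, then H is isomorphic to an induced subgraph of P4, the path on four vertices. -/
open SimpleGraph

universe u
variable {V : Type*} {W : Type*}

/-- `H` is isomorphic to an induced subgraph of `G`. -/
def SimpleGraph.IsIndSubgraph {W V : Type*} (H : SimpleGraph W) (G : SimpleGraph V) : Prop :=
  ∃ f : W ↪ V, ∀ a b, G.Adj (f a) (f b) ↔ H.Adj a b

/-- A set of pairwise non-adjacent vertices. -/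
def SimpleGraph.IsIndepSet' (G : SimpleGraph V) (s : Set V) : Prop :=
  s.Pairwise fun a b => ¬ G.Adj a b

/-- The independence number of `G`. -/
noncomputable def SimpleGraph.indepNum' (G : SimpleGraph V) : ℕ :=
  sSup {n | ∃ s : Set V, G.IsIndepSet' s ∧ s.ncard = n}

/-- A matching, viewed as a set of pairwise disjoint edges of `G`. -/
def SimpleGraph.IsMatchingSet (G : SimpleGraph V) (M : Set (Sym2 V)) : Prop :=
  M ⊆ G.edgeSet ∧ M.Pairwise fun e f => ∀ x, x ∈ e → x ∉ f

/-- The matching number of `G`. -/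
noncomputable def SimpleGraph.matchingNum (G : SimpleGraph V) : ℕ :=
  sSup {n | ∃ M : Set (Sym2 V), G.IsMatchingSet M ∧ M.ncard = n}

/-- A vertex cover. -/
def SimpleGraph.IsVertexCover' (G : SimpleGraph V) (C : Set V) : Prop :=
  ∀ u v, G.Adj u v → u ∈ C ∨ v ∈ C

/-- Contraction of the edge `uv`, identifying the new vertex with `v`. -/
def SimpleGraph.contractEdge (G : SimpleGraph V) (u v : V) : SimpleGraph {x : V // x ≠ u} where
  Adj x y := x ≠ y ∧ (G.Adj x y ∨ (x.1 = v ∧ G.Adj u y) ∨ (y.1 = v ∧ G.Adj u x))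
  symm := ⟨by
    rintro x y ⟨hne, h⟩
    refine ⟨hne.symm, ?_⟩
    rcases h with h | h | h
    · exact Or.inl h.symm
    · exact Or.inr (Or.inr h)
    · exact Or.inr (Or.inl h)⟩
  loopless := ⟨fun x h => h.1 rfl⟩

/-- A maximal clique. -/
def SimpleGraph.IsMaxlClique (G : SimpleGraph V) (K : Set V) : Prop :=
  G.IsClique K ∧ ∀ K' : Set V, G.IsClique K' → K ⊆ K' → K' = K

section Helpers
variable {H : SimpleGraph W}

lemma myNoCycle (hforest : H.IsAcyclic) {a b : W} (hab : H.Adj a b)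
    (p : H.Walk a b) (hp : s(a, b) ∉ p.edges) : False := by
  have := (SimpleGraph.isAcyclic_iff_forall_adj_isBridge.mp hforest hab)
  rw [SimpleGraph.isBridge_iff_adj_and_forall_walk_mem_edges] at this
  exact hp (this p)

lemma myNoTriangle (hforest : H.IsAcyclic) {a b c : W} (hab : H.Adj a b)
    (hbc : H.Adj b c) (hca : H.Adj c a) : False := by
  have h1 := hbc.ne
  have h2 := hca.ne
  refine myNoCycle hforest hab (Walk.cons hca.symm (Walk.cons hbc.symm Walk.nil)) ?_
  simp [Sym2.eq_iff]; tauto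

lemma myNoC4 (hforest : H.IsAcyclic) {a b c d : W} (hac : a ≠ c) (hbd : b ≠ d)
    (hab : H.Adj a b) (hbc : H.Adj b c) (hcd : H.Adj c d) (hda : H.Adj d a) : False := by
  have h1 := hab.ne
  have h2 := hbc.ne
  have h3 := hcd.ne
  have h4 := hda.ne
  refine myNoCycle hforest hab
    (Walk.cons hda.symm (Walk.cons hcd.symm (Walk.cons hbc.symm Walk.nil))) ?_
  simp [Sym2.eq_iff]; tauto

lemma myNoC5 (hforest : H.IsAcyclic) {a b c d e : W} (hac : a ≠ c) (had : a ≠ d)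
    (hbd : b ≠ d) (hbe : b ≠ e) (hab : H.Adj a b)
    (hbc : H.Adj b c) (hcd : H.Adj c d) (hde : H.Adj d e) (hea : H.Adj e a) : False := by
  have h1 := hab.ne
  have h2 := hbc.ne
  have h3 := hcd.ne
  have h4 := hde.ne
  have h5 := hea.ne
  refine myNoCycle hforest hab
    (Walk.cons hea.symm (Walk.cons hde.symm (Walk.cons hcd.symm (Walk.cons hbc.symm Walk.nil)))) ?_
  simp [Sym2.eq_iff]; tauto

lemma my3P1 (h3P1 : ¬ (⊥ : SimpleGraph (Fin 3)).IsIndSubgraph H)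
    {a b c : W} (hab : a ≠ b) (hac : a ≠ c) (hbc : b ≠ c)
    (nab : ¬ H.Adj a b) (nac : ¬ H.Adj a c) (nbc : ¬ H.Adj b c) : False := by
  apply h3P1
  have nba : ¬ H.Adj b a := fun h => nab (H.adj_symm h)
  have nca : ¬ H.Adj c a := fun h => nac (H.adj_symm h)
  have ncb : ¬ H.Adj c b := fun h => nbc (H.adj_symm h)
  refine ⟨⟨![a, b, c], ?_⟩, ?_⟩
  · intro i j h
    fin_cases i <;> fin_cases j <;> simp_all
  · intro i j
    fin_cases i <;> fin_cases j <;>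
      simp [nab, nac, nbc, nba, nca, ncb, H.irrefl, DFunLike.coe]

lemma my2P2
    (h2P2 : ¬ (SimpleGraph.fromEdgeSet ({s(0, 1), s(2, 3)} : Set (Sym2 (Fin 4)))).IsIndSubgraph H)
    {a b c d : W} (hac : a ≠ c) (had : a ≠ d) (hbc : b ≠ c) (hbd : b ≠ d)
    (hab : H.Adj a b) (hcd : H.Adj c d)
    (nac : ¬ H.Adj a c) (nad : ¬ H.Adj a d) (nbc : ¬ H.Adj b c) (nbd : ¬ H.Adj b d) : False := by
  apply h2P2
  have hab' := hab.ne
  have hcd' := hcd.ne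
  have nca : ¬ H.Adj c a := fun h => nac (H.adj_symm h)
  have nda : ¬ H.Adj d a := fun h => nad (H.adj_symm h)
  have ncb : ¬ H.Adj c b := fun h => nbc (H.adj_symm h)
  have ndb : ¬ H.Adj d b := fun h => nbd (H.adj_symm h)
  refine ⟨⟨![a, b, c, d], ?_⟩, ?_⟩
  · intro i j h
    fin_cases i <;> fin_cases j <;> simp_all
  · intro i j
    fin_cases i <;> fin_cases j <;>
      simp [fromEdgeSet_adj, Sym2.eq_iff, hab, hcd, hab.symm, hcd.symm,
        nac, nad, nbc, nbd, nca, nda, ncb, ndb, H.irrefl, DFunLike.coe] <;> decide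

lemma embP4 {a b c d : W} (hcov : ∀ x, x = a ∨ x = b ∨ x = c ∨ x = d)
    (hab : a ≠ b) (hac : a ≠ c) (had : a ≠ d) (hbc : b ≠ c) (hbd : b ≠ d) (hcd : c ≠ d)
    (eab : H.Adj a b) (ebc : H.Adj b c) (ecd : H.Adj c d)
    (nac : ¬ H.Adj a c) (nad : ¬ H.Adj a d) (nbd : ¬ H.Adj b d) :
    H.IsIndSubgraph (pathGraph 4) := by
  classical
  have nca : ¬ H.Adj c a := fun h => nac h.symm
  have nda : ¬ H.Adj d a := fun h => nad h.symm
  have ndb : ¬ H.Adj d b := fun h => nbd h.symm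
  have eba := eab.symm
  have ecb := ebc.symm
  have edc := ecd.symm
  have hba := hab.symm
  have hca := hac.symm
  have hda := had.symm
  have hcb := hbc.symm
  have hdb := hbd.symm
  have hdc := hcd.symm
  refine ⟨⟨fun x => if x = a then 0 else if x = b then 1 else if x = c then 2 else 3, ?_⟩, ?_⟩
  · intro x y h
    rcases hcov x with rfl | rfl | rfl | rfl <;> rcases hcov y with rfl | rfl | rfl | rfl <;>
      simp_all
  · intro x y
    rcases hcov x with rfl | rfl | rfl | rfl <;> rcases hcov y with rfl | rfl | rfl | rfl <;>
      simp_all [pathGraph_adj, DFunLike.coe] <;> decide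

lemma embP3 {a b c : W} (hcov : ∀ x, x = a ∨ x = b ∨ x = c)
    (hab : a ≠ b) (hac : a ≠ c) (hbc : b ≠ c)
    (eab : H.Adj a b) (ebc : H.Adj b c) (nac : ¬ H.Adj a c) :
    H.IsIndSubgraph (pathGraph 4) := by
  classical
  have nca : ¬ H.Adj c a := fun h => nac h.symm
  have eba := eab.symm
  have ecb := ebc.symm
  have hba := hab.symm
  have hca := hac.symm
  have hcb := hbc.symm
  refine ⟨⟨fun x => if x = a then 0 else if x = b then 1 else 2, ?_⟩, ?_⟩
  · intro x y h
    rcases hcov x with rfl | rfl | rfl <;> rcases hcov y with rfl | rfl | rfl <;> simp_all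
  · intro x y
    rcases hcov x with rfl | rfl | rfl <;> rcases hcov y with rfl | rfl | rfl <;>
      simp_all [pathGraph_adj, DFunLike.coe] <;> decide

lemma embK2K1 {a b c : W} (hcov : ∀ x, x = a ∨ x = b ∨ x = c)
    (hab : a ≠ b) (hac : a ≠ c) (hbc : b ≠ c)
    (eab : H.Adj a b) (nac : ¬ H.Adj a c) (nbc : ¬ H.Adj b c) :
    H.IsIndSubgraph (pathGraph 4) := by
  classical
  have nca : ¬ H.Adj c a := fun h => nac h.symm
  have ncb : ¬ H.Adj c b := fun h => nbc h.symm
  have eba := eab.symm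
  have hba := hab.symm
  have hca := hac.symm
  have hcb := hbc.symm
  refine ⟨⟨fun x => if x = a then 2 else if x = b then 3 else 0, ?_⟩, ?_⟩
  · intro x y h
    rcases hcov x with rfl | rfl | rfl <;> rcases hcov y with rfl | rfl | rfl <;> simp_all
  · intro x y
    rcases hcov x with rfl | rfl | rfl <;> rcases hcov y with rfl | rfl | rfl <;>
      simp_all [pathGraph_adj, DFunLike.coe] <;> decide

lemma embK2 {a b : W} (hcov : ∀ x, x = a ∨ x = b) (hab : a ≠ b) (eab : H.Adj a b) :
    H.IsIndSubgraph (pathGraph 4) := by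
  classical
  have eba := eab.symm
  have hba := hab.symm
  refine ⟨⟨fun x => if x = a then 0 else 1, ?_⟩, ?_⟩
  · intro x y h
    rcases hcov x with rfl | rfl <;> rcases hcov y with rfl | rfl <;> simp_all
  · intro x y
    rcases hcov x with rfl | rfl <;> rcases hcov y with rfl | rfl <;>
      simp_all [pathGraph_adj, DFunLike.coe] <;> decide

lemma emb2P1 {a b : W} (hcov : ∀ x, x = a ∨ x = b) (hab : a ≠ b) (nab : ¬ H.Adj a b) :
    H.IsIndSubgraph (pathGraph 4) := by
  classical
  have nba : ¬ H.Adj b a := fun h => nab h.symm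
  have hba := hab.symm
  refine ⟨⟨fun x => if x = a then 0 else 2, ?_⟩, ?_⟩
  · intro x y h
    rcases hcov x with rfl | rfl <;> rcases hcov y with rfl | rfl <;> simp_all
  · intro x y
    rcases hcov x with rfl | rfl <;> rcases hcov y with rfl | rfl <;>
      simp_all [pathGraph_adj, DFunLike.coe] <;> decide

lemma emb1 {a : W} (hcov : ∀ x, x = a) : H.IsIndSubgraph (pathGraph 4) := by
  refine ⟨⟨fun _ => 0, ?_⟩, ?_⟩
  · intro x y _
    rw [hcov x, hcov y]
  · intro x y
    rw [hcov x, hcov y]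
    simp [pathGraph_adj]

lemma emb0 (h : IsEmpty W) : H.IsIndSubgraph (pathGraph 4) :=
  ⟨⟨fun x => isEmptyElim x, fun x => isEmptyElim x⟩, fun x => isEmptyElim x⟩

lemma main_aux (hforest : H.IsAcyclic)
    (h3P1 : ¬ (⊥ : SimpleGraph (Fin 3)).IsIndSubgraph H)
    (h2P2 : ¬ (SimpleGraph.fromEdgeSet ({s(0, 1), s(2, 3)} : Set (Sym2 (Fin 4)))).IsIndSubgraph H)
    {a b : W} (eab : H.Adj a b) (hA : ∃ c, H.Adj a c ∧ c ≠ b) :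
    H.IsIndSubgraph (pathGraph 4) := by
  obtain ⟨c, eac, hcb⟩ := hA
  have hab : a ≠ b := eab.ne
  have hac : a ≠ c := eac.ne
  have nbc : ¬ H.Adj b c := fun h => myNoTriangle hforest eab h eac.symm
  -- every neighbour of a is b or c
  have huniqA : ∀ x, H.Adj a x → x = b ∨ x = c := by
    intro x hax
    by_contra hcon
    push_neg at hcon
    obtain ⟨hxb, hxc⟩ := hcon
    have nxc : ¬ H.Adj x c := fun h => myNoTriangle hforest hax h eac.symm
    have nxb : ¬ H.Adj x b := fun h => myNoTriangle hforest hax h eab.symm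
    exact my3P1 h3P1 hxb hxc hcb.symm nxb nxc nbc
  by_cases hB : ∃ d, H.Adj b d ∧ d ≠ a
  · obtain ⟨d, ebd, hda⟩ := hB
    have hbd : b ≠ d := ebd.ne
    have hdc : d ≠ c := by
      rintro rfl
      exact nbc ebd
    have nad : ¬ H.Adj a d := fun h => myNoTriangle hforest eab ebd h.symm
    have ncd : ¬ H.Adj c d := fun h =>
      myNoC4 hforest (fun h' => hda h'.symm) hcb.symm eab ebd h.symm eac.symm
    have huniqB : ∀ x, H.Adj b x → x = a ∨ x = d := by
      intro x hbx
      by_contra hcon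
      push_neg at hcon
      obtain ⟨hxa, hxd⟩ := hcon
      have nxa : ¬ H.Adj x a := fun h => myNoTriangle hforest h eab hbx
      have nxd : ¬ H.Adj x d := fun h => myNoTriangle hforest hbx h ebd.symm
      exact my3P1 h3P1 hxa hxd (fun h => hda h.symm) nxa nxd nad
    have hcov : ∀ x, x = c ∨ x = a ∨ x = b ∨ x = d := by
      intro x
      by_cases hxa : x = a
      · exact Or.inr (Or.inl hxa)
      by_cases hxb : x = b
      · exact Or.inr (Or.inr (Or.inl hxb))
      by_cases hax : H.Adj a x
      · rcases huniqA x hax with h | h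
        · exact absurd h hxb
        · exact Or.inl h
      by_cases hbx : H.Adj b x
      · rcases huniqB x hbx with h | h
        · exact absurd h hxa
        · exact Or.inr (Or.inr (Or.inr h))
      -- x is nonadjacent to both a and b: contradiction
      exfalso
      have hxc : x ≠ c := by rintro rfl; exact hax eac
      have hxd : x ≠ d := by rintro rfl; exact hbx ebd
      by_cases hcx : H.Adj c x
      · by_cases hdx : H.Adj x d
        · -- C5: a-b-d-x-c-a
          exact myNoC5 hforest (fun h => hda h.symm) (Ne.symm hxa) (Ne.symm hxb) hcb.symm
            eab ebd hdx.symm hcx.symm eac.symm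
        · -- 2P2 : {c,x} and {b,d}
          exact my2P2 h2P2 hcb hdc.symm hxb hxd hcx ebd
            (fun h => nbc h.symm) ncd (fun h => hbx h.symm) hdx
      · -- ¬ Adj c x
        by_cases hdx : H.Adj x d
        · -- 2P2 : {x,d} and {a,c}
          exact my2P2 h2P2 hxa hxc hda hdc hdx eac
            (fun h => hax h.symm) (fun h => hcx h.symm) (fun h => nad h.symm)
            (fun h => ncd h.symm)
        · -- 3P1 : {x,c,d}
          exact my3P1 h3P1 hxc hxd hdc.symm (fun h => hcx h.symm) hdx ncd
    exact embP4 hcov (Ne.symm hac) hcb (fun h => hdc h.symm) hab (fun h => hda h.symm) hbd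
      eac.symm eab ebd (fun h => nbc h.symm) ncd nad
  · push_neg at hB
    have hBn : ∀ d, H.Adj b d → d = a := by
      intro d h
      by_contra hne
      exact hne (hB d h)
    by_cases hN : ∃ e, e ≠ a ∧ e ≠ b ∧ ¬ H.Adj a e ∧ ¬ H.Adj b e
    · obtain ⟨e, hea, heb, nae, nbe⟩ := hN
      have hec : e ≠ c := by rintro rfl; exact nae eac
      have ece : H.Adj c e := by
        by_contra hce
        exact my3P1 h3P1 hec.symm hcb heb hce
          (fun h => nbc h.symm) (fun h => nbe h.symm)
      have hcov : ∀ x, x = e ∨ x = c ∨ x = a ∨ x = b := by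
        intro x
        by_cases hxa : x = a
        · exact Or.inr (Or.inr (Or.inl hxa))
        by_cases hxb : x = b
        · exact Or.inr (Or.inr (Or.inr hxb))
        by_cases hax : H.Adj a x
        · rcases huniqA x hax with h | h
          · exact absurd h hxb
          · exact Or.inr (Or.inl h)
        by_cases hbx : H.Adj b x
        · exact absurd (hBn x hbx) hxa
        left
        by_contra hxe
        have exe : H.Adj x e := by
          by_contra h
          exact my3P1 h3P1 hxe hxa hea h (fun h' => hax h'.symm)
            (fun h' => nae h'.symm)
        exact my2P2 h2P2 hxa hxb hea heb exe eab
          (fun h => hax h.symm) (fun h => hbx h.symm) (fun h => nae h.symm)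
          (fun h => nbe h.symm)
      exact embP4 hcov hec hea heb hac.symm hcb hab
        ece.symm eac.symm eab (fun h => nae h.symm) (fun h => nbe h.symm)
        (fun h => nbc h.symm)
    · push_neg at hN
      have hcov : ∀ x, x = c ∨ x = a ∨ x = b := by
        intro x
        by_cases hxa : x = a
        · exact Or.inr (Or.inl hxa)
        by_cases hxb : x = b
        · exact Or.inr (Or.inr hxb)
        by_cases hax : H.Adj a x
        · rcases huniqA x hax with h | h
          · exact absurd h hxb
          · exact Or.inl h
        by_cases hbx : H.Adj b x
        · exact absurd (hBn x hbx) hxa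
        · exact absurd (hN x hxa hxb hax) hbx
      -- finish : path c - a - b
      exact embP3 hcov hac.symm hcb hab eac.symm eab (fun h => nbc h.symm)

end Helpers

/-- A `(3P1, 2P2)`-free forest is an induced subgraph of `P4`. -/
theorem stmt2 {W : Type*} [Fintype W] (H : SimpleGraph W) (hforest : H.IsAcyclic)
    (h3P1 : ¬ (⊥ : SimpleGraph (Fin 3)).IsIndSubgraph H)
    (h2P2 : ¬ (SimpleGraph.fromEdgeSet ({s(0, 1), s(2, 3)} : Set (Sym2 (Fin 4)))).IsIndSubgraph H) :
    H.IsIndSubgraph (pathGraph 4) := by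
  by_cases hE : ∃ u v, H.Adj u v
  · obtain ⟨u, v, euv⟩ := hE
    by_cases hA : ∃ c, H.Adj u c ∧ c ≠ v
    · exact main_aux hforest h3P1 h2P2 euv hA
    by_cases hA' : ∃ c, H.Adj v c ∧ c ≠ u
    · exact main_aux hforest h3P1 h2P2 euv.symm hA'
    push_neg at hA hA'
    have huv : u ≠ v := euv.ne
    by_cases hN : ∃ e, e ≠ u ∧ e ≠ v ∧ ¬ H.Adj u e ∧ ¬ H.Adj v e
    · obtain ⟨e, heu, hev, nue, nve⟩ := hN
      have hcov : ∀ x, x = u ∨ x = v ∨ x = e := by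
        intro x
        by_cases hxu : x = u
        · exact Or.inl hxu
        by_cases hxv : x = v
        · exact Or.inr (Or.inl hxv)
        by_cases hux : H.Adj u x
        · exact absurd (hA x hux) hxv
        by_cases hvx : H.Adj v x
        · exact absurd (hA' x hvx) hxu
        right; right
        by_contra hxe
        have exe : H.Adj x e := by
          by_contra h
          exact my3P1 h3P1 hxe hxu heu h (fun h' => hux h'.symm)
            (fun h' => nue h'.symm)
        exact my2P2 h2P2 hxu hxv heu hev exe euv (fun h => hux h.symm)
          (fun h => hvx h.symm) (fun h => nue h.symm) (fun h => nve h.symm)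
      exact embK2K1 hcov huv heu.symm hev.symm euv nue nve
    · push_neg at hN
      have hcov : ∀ x, x = u ∨ x = v := by
        intro x
        by_cases hxu : x = u
        · exact Or.inl hxu
        by_cases hxv : x = v
        · exact Or.inr hxv
        by_cases hux : H.Adj u x
        · exact absurd (hA x hux) hxv
        · exact absurd (hA' x (hN x hxu hxv hux)) hxu
      exact embK2 hcov huv euv
  · push_neg at hE
    rcases isEmpty_or_nonempty W with h | h
    · exact emb0 h
    obtain ⟨a⟩ := h
    by_cases hb : ∃ b, b ≠ a
    · obtain ⟨b, hba⟩ := hb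
      have hcov : ∀ x, x = a ∨ x = b := by
        intro x
        by_cases hxa : x = a
        · exact Or.inl hxa
        by_cases hxb : x = b
        · exact Or.inr hxb
        exact (my3P1 h3P1 hxa hxb hba.symm (hE x a) (hE x b) (hE a b)).elim
      exact emb2P1 hcov hba.symm (hE a b)
    · push_neg at hb
      exact emb1 fun x => not_not.mp (fun h => h (hb x))
end

section
/- Let G be a finite simple graph with an edge uv, and let G' be the graph obtained from G by subdividing the edge uv twice, i.e., by deleting the edge uv and adding two new vertices x and y together with the edges ux, xy and yv. Then α(G') = α(G) + 1. -/
open SimpleGraph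

universe u
variable {V : Type*} {W : Type*}

/-- The graph obtained from `G` by subdividing the edge `uv` twice: the edge `uv` is removed and
two new vertices `x = Sum.inr 0` and `y = Sum.inr 1` are added, together with the edges `ux`,
`xy` and `yv`. -/
def SimpleGraph.subdivideTwice (G : SimpleGraph V) (u v : V) : SimpleGraph (V ⊕ Fin 2) where
  Adj a b :=
    match a, b with
    | Sum.inl a, Sum.inl b => G.Adj a b ∧ ¬(a = u ∧ b = v) ∧ ¬(a = v ∧ b = u)
    | Sum.inl a, Sum.inr i => (i = 0 ∧ a = u) ∨ (i = 1 ∧ a = v)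
    | Sum.inr i, Sum.inl b => (i = 0 ∧ b = u) ∨ (i = 1 ∧ b = v)
    | Sum.inr i, Sum.inr j => i ≠ j
  symm := ⟨by
    rintro (a | i) (b | j) h
    · exact ⟨h.1.symm, fun hc => h.2.2 ⟨hc.2, hc.1⟩, fun hc => h.2.1 ⟨hc.2, hc.1⟩⟩
    · exact h
    · exact h
    · exact h.symm⟩
  loopless := ⟨by
    rintro (a | i) h
    · exact G.loopless.irrefl a h.1
    · exact h rfl⟩


section myHelpers
variable {V : Type*} [Fintype V] (G : SimpleGraph V)

private lemma my_bddAbove : BddAbove {n | ∃ s : Set V, G.IsIndepSet' s ∧ s.ncard = n} := by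
  refine ⟨Fintype.card V, ?_⟩
  rintro n ⟨s, -, rfl⟩
  simpa [Set.ncard_univ] using Set.ncard_le_ncard (Set.subset_univ s) Set.finite_univ

private lemma my_ncard_le_indepNum {s : Set V} (h : G.IsIndepSet' s) : s.ncard ≤ G.indepNum' :=
  le_csSup (my_bddAbove G) ⟨s, h, rfl⟩

private lemma my_exists_max_indep : ∃ s : Set V, G.IsIndepSet' s ∧ s.ncard = G.indepNum' := by
  have hne : ({n | ∃ s : Set V, G.IsIndepSet' s ∧ s.ncard = n}).Nonempty :=
    ⟨0, ∅, by simp [SimpleGraph.IsIndepSet'], by simp⟩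
  exact Nat.sSup_mem hne (my_bddAbove G)

end myHelpers

/-- Subdividing an edge twice increases the independence number by exactly one. -/
theorem stmt5 {V : Type*} [Fintype V] (G : SimpleGraph V) (u v : V) (huv : G.Adj u v) :
    (G.subdivideTwice u v).indepNum' = G.indepNum' + 1 := by
  classical
  set G' := G.subdivideTwice u v with hG'
  have hadj_ll : ∀ a b : V, G'.Adj (Sum.inl a) (Sum.inl b) ↔
      (G.Adj a b ∧ ¬(a = u ∧ b = v) ∧ ¬(a = v ∧ b = u)) := fun a b => Iff.rfl
  have hadj_rl : ∀ (i : Fin 2) (b : V), G'.Adj (Sum.inr i) (Sum.inl b) ↔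
      ((i = 0 ∧ b = u) ∨ (i = 1 ∧ b = v)) := fun i b => Iff.rfl
  have hadj_rr : ∀ i j : Fin 2, G'.Adj (Sum.inr i) (Sum.inr j) ↔ i ≠ j := fun i j => Iff.rfl
  apply le_antisymm
  · -- upper bound
    obtain ⟨s', hs', hcard⟩ := my_exists_max_indep G'
    rw [← hcard]
    set S : Set V := Sum.inl ⁻¹' s' with hS
    have key : ∀ T : Set V, T ⊆ S → (u ∉ T ∨ v ∉ T) → G.IsIndepSet' T := by
      intro T hTS huv' a ha b hb hab hAdj
      have h1 : ¬ G'.Adj (Sum.inl a) (Sum.inl b) :=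
        hs' (hTS ha) (hTS hb) (fun h => hab (Sum.inl_injective h))
      apply h1
      rw [hadj_ll]
      refine ⟨hAdj, ?_, ?_⟩
      · rintro ⟨rfl, rfl⟩
        rcases huv' with h | h
        · exact h ha
        · exact h hb
      · rintro ⟨rfl, rfl⟩
        rcases huv' with h | h
        · exact h hb
        · exact h ha
    have himg : (Sum.inl '' S : Set (V ⊕ Fin 2)).ncard = S.ncard :=
      Set.ncard_image_of_injective _ Sum.inl_injective
    by_cases hb : u ∈ S ∧ v ∈ S
    · -- both endpoints in S: neither subdivision vertex is in s'
      have h0 : (Sum.inr 0 : V ⊕ Fin 2) ∉ s' := fun h0 =>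
        hs' h0 hb.1 (by simp) ((hadj_rl 0 u).mpr (Or.inl ⟨rfl, rfl⟩))
      have h1 : (Sum.inr 1 : V ⊕ Fin 2) ∉ s' := fun h1 =>
        hs' h1 hb.2 (by simp) ((hadj_rl 1 v).mpr (Or.inr ⟨rfl, rfl⟩))
      have hsub : s' ⊆ Sum.inl '' S := by
        rintro (a | i) hx
        · exact ⟨a, hx, rfl⟩
        · fin_cases i
          · exact absurd hx h0
          · exact absurd hx h1
      have hT : G.IsIndepSet' (S \ {u}) := key _ Set.diff_subset (Or.inl (by simp))
      have hcount : (S \ {u}).ncard + 1 = S.ncard :=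
        Set.ncard_diff_singleton_add_one hb.1 (Set.toFinite _)
      calc s'.ncard ≤ (Sum.inl '' S).ncard := Set.ncard_le_ncard hsub (Set.toFinite _)
        _ = (S \ {u}).ncard + 1 := by rw [himg, hcount]
        _ ≤ G.indepNum' + 1 := Nat.add_le_add_right (my_ncard_le_indepNum G hT) 1
    · have hSind : G.IsIndepSet' S := key S subset_rfl (not_and_or.mp hb)
      have hsub : ∃ w : V ⊕ Fin 2, s' ⊆ insert w (Sum.inl '' S) := by
        by_cases h0 : (Sum.inr 0 : V ⊕ Fin 2) ∈ s'
        · refine ⟨Sum.inr 0, ?_⟩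
          rintro (a | i) hx
          · exact Set.mem_insert_of_mem _ ⟨a, hx, rfl⟩
          · fin_cases i
            · exact Set.mem_insert _ _
            · exact absurd ((hadj_rr 0 1).mpr (by decide))
                (hs' h0 hx (by simp [Fin.ext_iff]))
        · refine ⟨Sum.inr 1, ?_⟩
          rintro (a | i) hx
          · exact Set.mem_insert_of_mem _ ⟨a, hx, rfl⟩
          · fin_cases i
            · exact absurd hx h0
            · exact Set.mem_insert _ _
      obtain ⟨w, hsub⟩ := hsub
      calc s'.ncard ≤ (insert w (Sum.inl '' S)).ncard :=
            Set.ncard_le_ncard hsub (Set.toFinite _)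
        _ ≤ (Sum.inl '' S).ncard + 1 := Set.ncard_insert_le _ _
        _ = S.ncard + 1 := by rw [himg]
        _ ≤ G.indepNum' + 1 := Nat.add_le_add_right (my_ncard_le_indepNum G hSind) 1
  · -- lower bound
    obtain ⟨s, hs, hcard⟩ := my_exists_max_indep G
    rw [← hcard]
    by_cases hu : u ∈ s
    · have hv : v ∉ s := fun hv => hs hu hv (G.ne_of_adj huv) huv
      have hind : G'.IsIndepSet' (insert (Sum.inr 1) (Sum.inl '' s)) := by
        rintro x hx y hy hne hAdj
        rcases hx with rfl | ⟨a, ha, rfl⟩ <;> rcases hy with rfl | hy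
        · exact hne rfl
        · obtain ⟨b, hbs, rfl⟩ := hy
          rcases (hadj_rl 1 b).mp hAdj with ⟨h01, -⟩ | ⟨-, rfl⟩
          · exact absurd h01 (by decide)
          · exact hv hbs
        · rcases (hadj_rl 1 a).mp hAdj.symm with ⟨h01, -⟩ | ⟨-, rfl⟩
          · exact absurd h01 (by decide)
          · exact hv ha
        · obtain ⟨b, hbs, rfl⟩ := hy
          exact hs ha hbs (fun h => hne (by rw [h])) ((hadj_ll a b).mp hAdj).1
      have hnm : (Sum.inr 1 : V ⊕ Fin 2) ∉ Sum.inl '' s := by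
        rintro ⟨a, -, h⟩; exact Sum.inl_ne_inr h
      have := my_ncard_le_indepNum G' hind
      rwa [Set.ncard_insert_of_notMem hnm (Set.toFinite _),
        Set.ncard_image_of_injective _ Sum.inl_injective] at this
    · have hind : G'.IsIndepSet' (insert (Sum.inr 0) (Sum.inl '' s)) := by
        rintro x hx y hy hne hAdj
        rcases hx with rfl | ⟨a, ha, rfl⟩ <;> rcases hy with rfl | hy
        · exact hne rfl
        · obtain ⟨b, hbs, rfl⟩ := hy
          rcases (hadj_rl 0 b).mp hAdj with ⟨-, rfl⟩ | ⟨h01, -⟩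
          · exact hu hbs
          · exact absurd h01 (by decide)
        · rcases (hadj_rl 0 a).mp hAdj.symm with ⟨-, rfl⟩ | ⟨h01, -⟩
          · exact hu ha
          · exact absurd h01 (by decide)
        · obtain ⟨b, hbs, rfl⟩ := hy
          exact hs ha hbs (fun h => hne (by rw [h])) ((hadj_ll a b).mp hAdj).1
      have hnm : (Sum.inr 0 : V ⊕ Fin 2) ∉ Sum.inl '' s := by
        rintro ⟨a, -, h⟩; exact Sum.inl_ne_inr h
      have := my_ncard_le_indepNum G' hind
      rwa [Set.ncard_insert_of_notMem hnm (Set.toFinite _),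
        Set.ncard_image_of_injective _ Sum.inl_injective] at this
end

section
/- Let G be a C4-free finite simple graph and let uv be an edge of G, with G/uv the contraction of uv in which the new vertex is identified with v. Then: (1) for every maximal clique K of G/uv with v ∈ K, there is a maximal clique K' of G such that either (a) |K| = |K'| and K \ {v} = K' \ {u}, or (b) |K| = |K'| and K \ {v} = K' \ {v} (i.e., K' = K), or (c) |K| = |K'| − 1 and K \ {v} = K' \ {u, v}; and (2) the maximal cliques of G/uv that do not contain v are exactly the maximal cliques of G that contain neither u nor v. -/
open SimpleGraph

universe u
variable {V : Type*} {W : Type*}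

lemma contractEdge_adj' (G : SimpleGraph V) (u v : V) (x y : {x : V // x ≠ u}) :
    (G.contractEdge u v).Adj x y ↔
      x ≠ y ∧ (G.Adj x y ∨ (x.1 = v ∧ G.Adj u y) ∨ (y.1 = v ∧ G.Adj u x)) := Iff.rfl

lemma c4Key {V : Type*} (G : SimpleGraph V) (hC4 : ¬ (cycleGraph 4).IsIndSubgraph G)
    {a b c d : V} (hab : G.Adj a b) (hbc : G.Adj b c) (hcd : G.Adj c d) (hda : G.Adj d a)
    (hac : ¬ G.Adj a c) (hbd : ¬ G.Adj b d) (hac' : a ≠ c) (hbd' : b ≠ d) : False := by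
  have hca : ¬ G.Adj c a := fun h => hac h.symm
  have hdb : ¬ G.Adj d b := fun h => hbd h.symm
  apply hC4
  refine ⟨⟨![a,b,c,d], ?_⟩, ?_⟩
  · intro i j h
    fin_cases i <;> fin_cases j <;> simp_all [hab.ne, hbc.ne, hcd.ne, hda.ne,
      hab.ne', hbc.ne', hcd.ne', hda.ne', hac', hbd', hac'.symm, hbd'.symm]
  · intro i j
    change G.Adj (![a,b,c,d] i) (![a,b,c,d] j) ↔ _
    fin_cases i <;> fin_cases j <;>
      simp [cycleGraph_adj, hab, hbc, hcd, hda, hab.symm, hbc.symm, hcd.symm, hda.symm,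
        hac, hbd, hca, hdb] <;> decide

lemma dichotomyKey {V : Type*} (G : SimpleGraph V) (hC4 : ¬ (cycleGraph 4).IsIndSubgraph G)
    {u v : V} (huv : G.Adj u v) {S : Set V} (hS : G.IsClique S)
    (hSu : ∀ x ∈ S, x ≠ u) (hSv : ∀ x ∈ S, x ≠ v)
    (hadj : ∀ x ∈ S, G.Adj v x ∨ G.Adj u x) :
    (∀ x ∈ S, G.Adj v x) ∨ (∀ x ∈ S, G.Adj u x) := by
  by_cases h : ∀ x ∈ S, G.Adj v x
  · exact Or.inl h
  · push_neg at h
    obtain ⟨a, ha, hva⟩ := h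
    have hua : G.Adj u a := (hadj a ha).resolve_left hva
    right
    intro x hx
    rcases hadj x hx with hvx | hux
    · by_contra hux
      have hxa : x ≠ a := by rintro rfl; exact hva hvx
      have hxa' : G.Adj x a := hS hx ha hxa
      exact c4Key G hC4 hvx.symm huv.symm hua hxa'.symm
        (fun h => hux h.symm) hva (hSu x hx) (Ne.symm (hSv a ha))
    · exact hux

/-- maximal cliques of the contraction `G/uv` of a `C4`-free graph `G`. -/
theorem stmt7 {V : Type*} [Fintype V] (G : SimpleGraph V)
    (hC4 : ¬ (cycleGraph 4).IsIndSubgraph G) (u v : V) (huv : G.Adj u v) :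
    (∀ K : Set {x : V // x ≠ u}, (G.contractEdge u v).IsMaxlClique K →
      (⟨v, huv.ne'⟩ : {x : V // x ≠ u}) ∈ K →
      ∃ K' : Set V, G.IsMaxlClique K' ∧
        ((K.ncard = K'.ncard ∧
            Subtype.val '' (K \ {(⟨v, huv.ne'⟩ : {x : V // x ≠ u})}) = K' \ {u}) ∨
         (K.ncard = K'.ncard ∧
            Subtype.val '' (K \ {(⟨v, huv.ne'⟩ : {x : V // x ≠ u})}) = K' \ {v}) ∨
         (K.ncard + 1 = K'.ncard ∧
            Subtype.val '' (K \ {(⟨v, huv.ne'⟩ : {x : V // x ≠ u})}) = K' \ {u, v}))) ∧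
    {K' : Set V | ∃ K : Set {x : V // x ≠ u}, (G.contractEdge u v).IsMaxlClique K ∧
        (⟨v, huv.ne'⟩ : {x : V // x ≠ u}) ∉ K ∧ K' = Subtype.val '' K} =
      {K' : Set V | G.IsMaxlClique K' ∧ u ∉ K' ∧ v ∉ K'} := by
  set v' : {x : V // x ≠ u} := ⟨v, huv.ne'⟩ with hv'def
  constructor
  · -- Part 1
    intro K hK hvK
    set S : Set V := Subtype.val '' (K \ {v'}) with hSdef
    have hSiff : ∀ x : V, x ∈ S ↔ ∃ hxu : x ≠ u, (⟨x, hxu⟩ : {x : V // x ≠ u}) ∈ K ∧ x ≠ v := by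
      intro x
      constructor
      · rintro ⟨y, ⟨hyK, hyv⟩, rfl⟩
        exact ⟨y.2, hyK, fun h => hyv (Subtype.ext h)⟩
      · rintro ⟨hxu, hxK, hxv⟩
        exact ⟨⟨x, hxu⟩, ⟨hxK, fun h => hxv (congrArg Subtype.val h)⟩, rfl⟩
    have hSu : ∀ x ∈ S, x ≠ u := fun x hx => ((hSiff x).1 hx).1
    have hSv : ∀ x ∈ S, x ≠ v := fun x hx => ((hSiff x).1 hx).2.2
    have hvS : v ∉ S := fun h => hSv v h rfl
    have huS : u ∉ S := fun h => hSu u h rfl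
    have hSclique : G.IsClique S := by
      rintro x ⟨a, ⟨haK, hav'⟩, rfl⟩ y ⟨b, ⟨hbK, hbv'⟩, rfl⟩ hne
      have hab : a ≠ b := fun h => hne (congrArg Subtype.val h)
      have h := (contractEdge_adj' G u v a b).1 (hK.1 haK hbK hab)
      rcases h.2 with h | ⟨h1, _⟩ | ⟨h1, _⟩
      · exact h
      · exact (hav' (Subtype.ext h1)).elim
      · exact (hbv' (Subtype.ext h1)).elim
    have hSadjuv : ∀ x ∈ S, G.Adj v x ∨ G.Adj u x := by
      intro x hx
      obtain ⟨hxu, hxK, hxv⟩ := (hSiff x).1 hx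
      have hne : v' ≠ ⟨x, hxu⟩ := fun h => hxv (congrArg Subtype.val h).symm
      have h := (contractEdge_adj' G u v v' ⟨x, hxu⟩).1 (hK.1 hvK hxK hne)
      rcases h.2 with h | ⟨_, h2⟩ | ⟨h1, _⟩
      · exact Or.inl h
      · exact Or.inr h2
      · exact (hxv h1).elim
    -- key extension lemma
    have key : ∀ w : V, (hwu : w ≠ u) → w ≠ v → w ∉ S → (G.Adj w v ∨ G.Adj u w) →
        (∀ x ∈ S, G.Adj w x) → False := by
      intro w hwu hwv hwS hwv' hwS'
      have hclique : (G.contractEdge u v).IsClique (insert ⟨w, hwu⟩ K) := by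
        apply hK.1.insert
        intro y hyK hne
        rw [contractEdge_adj']
        by_cases hy : y = v'
        · subst hy
          refine ⟨fun h => hwv (congrArg Subtype.val h), ?_⟩
          rcases hwv' with h | h
          · exact Or.inl h
          · exact Or.inr (Or.inr ⟨rfl, h⟩)
        · have hyS : (y : V) ∈ S := ⟨y, ⟨hyK, hy⟩, rfl⟩
          exact ⟨hne, Or.inl (hwS' y hyS)⟩
      have heq := hK.2 _ hclique (Set.subset_insert _ _)
      have hwK : (⟨w, hwu⟩ : {x : V // x ≠ u}) ∈ K := heq ▸ Set.mem_insert _ _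
      by_cases h : (⟨w, hwu⟩ : {x : V // x ≠ u}) = v'
      · exact hwv (congrArg Subtype.val h)
      · exact hwS ⟨⟨w, hwu⟩, ⟨hwK, h⟩, rfl⟩
    -- cardinality basics
    have h1 : S.ncard = (K \ {v'}).ncard :=
      Set.ncard_image_of_injective _ Subtype.val_injective
    have h2 : (K \ {v'}).ncard + 1 = K.ncard := Set.ncard_diff_singleton_add_one hvK
    by_cases hAv : ∀ x ∈ S, G.Adj v x
    · by_cases hBu : ∀ x ∈ S, G.Adj u x
      · -- case (c): both; K' = insert u (insert v S)
        refine ⟨insert u (insert v S), ⟨?_, ?_⟩, Or.inr (Or.inr ⟨?_, ?_⟩)⟩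
        · refine (hSclique.insert fun b hb _ => hAv b hb).insert ?_
          rintro b hb hbu
          rcases hb with rfl | hb
          · exact huv
          · exact hBu b hb
        · intro K'' hc hsub
          refine Set.Subset.antisymm ?_ hsub
          intro w hw
          by_contra hwK'
          have hadjall : ∀ z ∈ insert u (insert v S), G.Adj w z := fun z hz =>
            hc hw (hsub hz) (fun h => hwK' (h ▸ hz))
          have hwu : w ≠ u := fun h => hwK' (h ▸ Set.mem_insert _ _)
          have hwv : w ≠ v := fun h =>
            hwK' (h ▸ Set.mem_insert_of_mem _ (Set.mem_insert _ _))
          have hwS : w ∉ S := fun h =>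
            hwK' (Set.mem_insert_of_mem _ (Set.mem_insert_of_mem _ h))
          exact key w hwu hwv hwS
            (Or.inl (hadjall v (Set.mem_insert_of_mem _ (Set.mem_insert _ _))))
            (fun x hx => hadjall x (Set.mem_insert_of_mem _ (Set.mem_insert_of_mem _ hx)))
        · -- cardinality
          have huvS : u ∉ insert v S := by
            rintro (rfl | h)
            · exact huv.ne rfl
            · exact huS h
          rw [Set.ncard_insert_of_notMem huvS, Set.ncard_insert_of_notMem hvS]
          omega
        · -- set equality
          ext x
          constructor
          · rintro ⟨a, ⟨haK, hav'⟩, rfl⟩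
            have hxS : (a : V) ∈ S := ⟨a, ⟨haK, hav'⟩, rfl⟩
            refine ⟨Set.mem_insert_of_mem _ (Set.mem_insert_of_mem _ hxS), ?_⟩
            rintro (h | h)
            · exact huS (h ▸ hxS)
            · exact hvS (h ▸ hxS)
          · rintro ⟨(rfl | rfl | hx), hne⟩
            · exact (hne (Or.inl rfl)).elim
            · exact (hne (Or.inr rfl)).elim
            · exact hx
      · -- case (b): all adj v, some a with ¬ u~a; K' = insert v S
        push_neg at hBu
        obtain ⟨a, haS, hua⟩ := hBu
        refine ⟨insert v S, ⟨hSclique.insert fun b hb _ => hAv b hb, ?_⟩,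
          Or.inr (Or.inl ⟨?_, ?_⟩)⟩
        · intro K'' hc hsub
          refine Set.Subset.antisymm ?_ hsub
          intro w hw
          by_contra hwK'
          have hadjall : ∀ z ∈ insert v S, G.Adj w z := fun z hz =>
            hc hw (hsub hz) (fun h => hwK' (h ▸ hz))
          have hwv : w ≠ v := fun h => hwK' (h ▸ Set.mem_insert _ _)
          have hwS : w ∉ S := fun h => hwK' (Set.mem_insert_of_mem _ h)
          have hwu : w ≠ u := by
            rintro rfl
            exact hua (hadjall a (Set.mem_insert_of_mem _ haS))
          exact key w hwu hwv hwS (Or.inl (hadjall v (Set.mem_insert _ _)))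
            (fun x hx => hadjall x (Set.mem_insert_of_mem _ hx))
        · rw [Set.ncard_insert_of_notMem hvS]; omega
        · rw [Set.insert_diff_self_of_notMem hvS]
    · -- case (a): all adj u, some a with ¬ v~a; K' = insert u S
      have hBu := (dichotomyKey G hC4 huv hSclique hSu hSv hSadjuv).resolve_left hAv
      push_neg at hAv
      obtain ⟨a, haS, hva⟩ := hAv
      refine ⟨insert u S, ⟨hSclique.insert fun b hb _ => hBu b hb, ?_⟩,
        Or.inl ⟨?_, ?_⟩⟩
      · intro K'' hc hsub
        refine Set.Subset.antisymm ?_ hsub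
        intro w hw
        by_contra hwK'
        have hadjall : ∀ z ∈ insert u S, G.Adj w z := fun z hz =>
          hc hw (hsub hz) (fun h => hwK' (h ▸ hz))
        have hwu : w ≠ u := fun h => hwK' (h ▸ Set.mem_insert _ _)
        have hwS : w ∉ S := fun h => hwK' (Set.mem_insert_of_mem _ h)
        have hwv : w ≠ v := by
          rintro rfl
          exact hva (hadjall a (Set.mem_insert_of_mem _ haS))
        exact key w hwu hwv hwS (Or.inr (hadjall u (Set.mem_insert _ _)).symm)
          (fun x hx => hadjall x (Set.mem_insert_of_mem _ hx))
      · rw [Set.ncard_insert_of_notMem huS]; omega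
      · rw [Set.insert_diff_self_of_notMem huS]
  · -- Part 2
    ext K'
    simp only [Set.mem_setOf_eq]
    constructor
    · rintro ⟨K, hK, hvK, rfl⟩
      have hmemv : ∀ x ∈ K, (x : V) ≠ v := by
        intro x hx h
        exact hvK ((Subtype.ext h : x = v') ▸ hx)
      refine ⟨⟨?_, ?_⟩, ?_, ?_⟩
      · -- clique
        rintro x ⟨a, haK, rfl⟩ y ⟨b, hbK, rfl⟩ hne
        have hab : a ≠ b := fun h => hne (congrArg Subtype.val h)
        have h := (contractEdge_adj' G u v a b).1 (hK.1 haK hbK hab)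
        rcases h.2 with h | ⟨h1, _⟩ | ⟨h1, _⟩
        · exact h
        · exact (hmemv a haK h1).elim
        · exact (hmemv b hbK h1).elim
      · -- maximality
        intro K'' hc hsub
        refine Set.Subset.antisymm ?_ hsub
        intro w hw
        by_contra hwim
        have hadjall : ∀ x ∈ K, G.Adj w x := by
          intro x hx
          refine hc hw (hsub ⟨x, hx, rfl⟩) (fun h => hwim ?_)
          exact ⟨x, hx, h.symm⟩
        have hcontr : ∀ y : {x : V // x ≠ u}, (∀ x ∈ K, (G.contractEdge u v).Adj y x) →
            y ∉ K → False := by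
          intro y hyadj hyK
          have hclique : (G.contractEdge u v).IsClique (insert y K) :=
            hK.1.insert fun b hb _ => hyadj b hb
          have heq := hK.2 _ hclique (Set.subset_insert _ _)
          exact hyK (heq ▸ Set.mem_insert _ _)
        by_cases hwu : w = u
        · refine hcontr v' ?_ hvK
          intro x hx
          exact (contractEdge_adj' G u v v' x).2
            ⟨fun h => hmemv x hx (congrArg Subtype.val h).symm,
              Or.inr (Or.inl ⟨rfl, hwu ▸ hadjall x hx⟩)⟩
        · by_cases hwv : w = v
          · refine hcontr v' ?_ hvK
            intro x hx
            have hvx : G.Adj v x := hwv ▸ hadjall x hx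
            exact (contractEdge_adj' G u v v' x).2
              ⟨fun h => hmemv x hx (congrArg Subtype.val h).symm, Or.inl hvx⟩
          · refine hcontr ⟨w, hwu⟩ ?_ (fun h => hwim ⟨⟨w, hwu⟩, h, rfl⟩)
            intro x hx
            refine (contractEdge_adj' G u v ⟨w, hwu⟩ x).2
              ⟨fun h => hwim ⟨x, hx, (congrArg Subtype.val h).symm⟩, Or.inl (hadjall x hx)⟩
      · rintro ⟨a, _, h⟩
        exact a.2 h
      · rintro ⟨a, haK, h⟩
        exact hmemv a haK h
    · rintro ⟨⟨hKc, hKmax⟩, huK, hvK⟩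
      refine ⟨{x : {x : V // x ≠ u} | (x : V) ∈ K'}, ⟨?_, ?_⟩, ?_, ?_⟩
      · -- clique
        intro x hx y hy hne
        exact (contractEdge_adj' G u v x y).2
          ⟨hne, Or.inl (hKc hx hy (fun h => hne (Subtype.ext h)))⟩
      · -- maximality
        intro T hT hsub
        refine Set.Subset.antisymm ?_ hsub
        intro x hx
        by_contra hxK'
        have hadj : ∀ y (hy : y ∈ K'), (G.contractEdge u v).Adj x ⟨y, fun h => huK (h ▸ hy)⟩ := by
          intro y hy
          refine hT hx (hsub hy) (fun h => hxK' ?_)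
          show (x : V) ∈ K'
          rw [congrArg Subtype.val h]
          exact hy
        by_cases hxv : (x : V) = v
        · have hadj' : ∀ y ∈ K', G.Adj v y ∨ G.Adj u y := by
            intro y hy
            have h := (contractEdge_adj' G u v x _).1 (hadj y hy)
            rcases h.2 with h | ⟨_, h2⟩ | ⟨h1, _⟩
            · exact Or.inl (hxv ▸ h)
            · exact Or.inr h2
            · exact (hvK (h1 ▸ hy)).elim
          rcases dichotomyKey G hC4 huv hKc (fun y hy h => huK (h ▸ hy))
              (fun y hy h => hvK (h ▸ hy)) hadj' with h | h
          · have hcl : G.IsClique (insert v K') := hKc.insert fun b hb _ => h b hb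
            exact hvK ((hKmax _ hcl (Set.subset_insert _ _)) ▸ Set.mem_insert _ _)
          · have hcl : G.IsClique (insert u K') := hKc.insert fun b hb _ => h b hb
            exact huK ((hKmax _ hcl (Set.subset_insert _ _)) ▸ Set.mem_insert _ _)
        · have hadj' : ∀ y ∈ K', G.Adj (x : V) y := by
            intro y hy
            have h := (contractEdge_adj' G u v x _).1 (hadj y hy)
            rcases h.2 with h | ⟨h1, _⟩ | ⟨h1, _⟩
            · exact h
            · exact (hxv h1).elim
            · exact (hvK (h1 ▸ hy)).elim
          have hcl : G.IsClique (insert (x : V) K') := hKc.insert fun b hb _ => hadj' b hb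
          exact hxK' ((hKmax _ hcl (Set.subset_insert _ _)) ▸ Set.mem_insert _ _)
      · exact hvK
      · ext w
        constructor
        · intro hw
          exact ⟨⟨w, fun h => huK (h ▸ hw)⟩, hw, rfl⟩
        · rintro ⟨a, ha, rfl⟩
          exact ha
end

section
/- Let G be a C4-free finite simple graph and let uv be an edge of G. Then ω(G/uv) ≤ ω(G). Moreover, if every maximum clique of G contains both u and v, then ω(G/uv) = ω(G) − 1. -/
open SimpleGraph

universe u
variable {V : Type*} {W : Type*}

lemma key {V : Type*} (G : SimpleGraph V)
    (hC4 : ¬ (cycleGraph 4).IsIndSubgraph G) {u v : V} (huv : G.Adj u v)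
    {n : ℕ} {s : Finset {x : V // x ≠ u}} (hs : (G.contractEdge u v).IsNClique n s) :
    ∃ t : Finset V, G.IsNClique n t ∧ (u ∉ t ∨ v ∉ t) := by
  classical
  set t0 : Finset V := s.image Subtype.val with ht0
  have hcard : t0.card = n := by
    rw [ht0, Finset.card_image_of_injective _ Subtype.val_injective, hs.2]
  have hu : u ∉ t0 := by
    simp only [ht0, Finset.mem_image]
    rintro ⟨⟨x, hx⟩, _, h⟩
    exact hx h
  have hmem : ∀ x ∈ t0, ∃ hx : x ≠ u, (⟨x, hx⟩ : {x : V // x ≠ u}) ∈ s := by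
    intro x hx
    obtain ⟨⟨x', hx'⟩, hm, rfl⟩ := Finset.mem_image.mp hx
    exact ⟨hx', hm⟩
  have hc : ∀ x ∈ t0, ∀ y ∈ t0, x ≠ y →
      G.Adj x y ∨ (x = v ∧ G.Adj u y) ∨ (y = v ∧ G.Adj u x) := by
    intro x hx y hy hxy
    obtain ⟨hxu, hxs⟩ := hmem x hx
    obtain ⟨hyu, hys⟩ := hmem y hy
    have := hs.1 (Finset.mem_coe.mpr hxs) (Finset.mem_coe.mpr hys)
      (fun h => hxy (congrArg Subtype.val h))
    exact this.2
  have hadj : ∀ x ∈ t0, ∀ y ∈ t0, x ≠ y → x ≠ v → y ≠ v → G.Adj x y := by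
    intro x hx y hy hxy hxv hyv
    rcases hc x hx y hy hxy with h | ⟨h, _⟩ | ⟨h, _⟩
    · exact h
    · exact absurd h hxv
    · exact absurd h hyv
  by_cases hvmem : v ∈ t0
  · have hv : ∀ x ∈ t0, x ≠ v → G.Adj v x ∨ G.Adj u x := by
      intro x hx hxv
      rcases hc v hvmem x hx (Ne.symm hxv) with h | ⟨_, h⟩ | ⟨h, _⟩
      · exact Or.inl h
      · exact Or.inr h
      · exact absurd h hxv
    by_cases hB : ∃ b ∈ t0, b ≠ v ∧ ¬ G.Adj v b
    · obtain ⟨b, hbt, hbv, hnvb⟩ := hB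
      have hub : G.Adj u b := (hv b hbt hbv).resolve_left hnvb
      have hua : ∀ a ∈ t0, a ≠ v → G.Adj u a := by
        intro a hat hav
        by_cases hab : a = b
        · exact hab ▸ hub
        by_contra hnua
        have hva : G.Adj v a := (hv a hat hav).resolve_right hnua
        have hab' : G.Adj a b := hadj a hat b hbt hab hav hbv
        have hau : a ≠ u := (hmem a hat).1
        have hbu : b ≠ u := (hmem b hbt).1
        apply hC4
        refine ⟨⟨![u, v, a, b], ?_⟩, ?_⟩
        · intro i j hij
          fin_cases i <;> fin_cases j <;>
            simp [huv.ne, huv.ne', Ne.symm hau, Ne.symm hbu, Ne.symm hav,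
              Ne.symm hbv, hau, hbu, hav, hbv, hab, Ne.symm hab] at hij ⊢
        · have hcyc : ∀ i j : Fin 4, (cycleGraph 4).Adj i j ↔
              (i.val, j.val) ∈ [(0,1),(1,0),(1,2),(2,1),(2,3),(3,2),(3,0),(0,3)] := by
            decide
          have hnua' : ¬ G.Adj a u := fun h => hnua h.symm
          have hnvb' : ¬ G.Adj b v := fun h => hnvb h.symm
          intro i j
          show G.Adj (![u, v, a, b] i) (![u, v, a, b] j) ↔ _
          fin_cases i <;> fin_cases j <;>
            simp [hcyc, huv, huv.symm, hva, hva.symm, hab', hab'.symm,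
              hub, hub.symm, hnua, hnvb, hnua', hnvb', G.irrefl] <;> decide
      refine ⟨insert u (t0.erase v), ⟨?_, ?_⟩, Or.inr ?_⟩
      · rw [Finset.coe_insert]
        refine IsClique.insert ?_ ?_
        · intro x hx y hy hxy
          simp only [Finset.coe_erase, Set.mem_diff, Finset.mem_coe,
            Set.mem_singleton_iff] at hx hy
          exact hadj x hx.1 y hy.1 hxy hx.2 hy.2
        · intro b hb hbu
          simp only [Finset.coe_erase, Set.mem_diff, Finset.mem_coe,
            Set.mem_singleton_iff] at hb
          exact hua b hb.1 hb.2
      · have hn1 : 1 ≤ n := by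
          rw [← hcard]; exact Finset.card_pos.mpr ⟨v, hvmem⟩
        rw [Finset.card_insert_of_notMem (fun h => hu (Finset.mem_of_mem_erase h)),
          Finset.card_erase_of_mem hvmem, hcard]
        omega
      · simp only [Finset.mem_insert, Finset.mem_erase]
        push_neg
        exact ⟨huv.ne', fun h => absurd rfl h⟩
    · push_neg at hB
      refine ⟨t0, ⟨?_, hcard⟩, Or.inl hu⟩
      intro x hx y hy hxy
      by_cases hxv : x = v
      · subst hxv
        exact hB y hy (Ne.symm hxy)
      by_cases hyv : y = v
      · subst hyv
        exact (hB x hx hxy).symm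
      exact hadj x hx y hy hxy hxv hyv
  · refine ⟨t0, ⟨?_, hcard⟩, Or.inl hu⟩
    intro x hx y hy hxy
    exact hadj x hx y hy hxy (fun h => hvmem (h ▸ hx)) (fun h => hvmem (h ▸ hy))

/-- For a `C4`-free graph `G` and an edge `uv`, `ω(G/uv) ≤ ω(G)`; and if every
maximum clique of `G` contains both `u` and `v`, then `ω(G/uv) = ω(G) - 1`. -/
theorem stmt8 {V : Type*} [Fintype V] (G : SimpleGraph V)
    (hC4 : ¬ (cycleGraph 4).IsIndSubgraph G) (u v : V) (huv : G.Adj u v) :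
    (G.contractEdge u v).cliqueNum ≤ G.cliqueNum ∧
      ((∀ s : Finset V, G.IsNClique G.cliqueNum s → u ∈ s ∧ v ∈ s) →
        (G.contractEdge u v).cliqueNum = G.cliqueNum - 1) := by
  classical
  have part1 : (G.contractEdge u v).cliqueNum ≤ G.cliqueNum := by
    obtain ⟨s, hs⟩ := (G.contractEdge u v).exists_isNClique_cliqueNum
    obtain ⟨t, ht, _⟩ := key G hC4 huv hs
    rw [← ht.2]
    exact IsClique.card_le_cliqueNum (tc := ht.1)
  refine ⟨part1, fun hcond => ?_⟩
  have lb : G.cliqueNum - 1 ≤ (G.contractEdge u v).cliqueNum := by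
    obtain ⟨S, hS⟩ := G.exists_isNClique_cliqueNum
    obtain ⟨huS, hvS⟩ := hcond S hS
    set t : Finset {x : V // x ≠ u} := (S.erase u).subtype (fun x => x ≠ u) with ht
    have htc : (G.contractEdge u v).IsClique ↑t := by
      intro x hx y hy hxy
      have hx' : x.1 ∈ S := Finset.mem_of_mem_erase (Finset.mem_subtype.mp hx)
      have hy' : y.1 ∈ S := Finset.mem_of_mem_erase (Finset.mem_subtype.mp hy)
      exact ⟨hxy, Or.inl (hS.1 hx' hy' (fun h => hxy (Subtype.ext h)))⟩
    have hcard : t.card = G.cliqueNum - 1 := by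
      rw [ht, Finset.card_subtype,
        Finset.filter_true_of_mem (fun x hx => (Finset.mem_erase.mp hx).1),
        Finset.card_erase_of_mem huS, hS.2]
    rw [← hcard]
    exact IsClique.card_le_cliqueNum (tc := htc)
  have hne : (G.contractEdge u v).cliqueNum ≠ G.cliqueNum := by
    intro h
    obtain ⟨s, hs⟩ := (G.contractEdge u v).exists_isNClique_cliqueNum
    obtain ⟨t, htcl, hmiss⟩ := key G hC4 huv hs
    rw [h] at htcl
    obtain ⟨h1, h2⟩ := hcond t htcl
    rcases hmiss with h' | h'
    · exact h' h1
    · exact h' h2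
  omega
end

section
/- Let T be a tree on n ≥ 1 vertices and let d ≥ 0 be an integer. Say that a graph is obtained from T by p contractions if there is a sequence T = T_0, T_1, …, T_p in which each T_{i+1} = T_i/e_i for some edge e_i of T_i. Then there exists a tree T'' obtained from T by some number of contractions with α(T'') ≤ α(T) − d if and only if d ≤ α(T) − 1; and in that case the minimum number p of contractions needed to obtain such a tree T'' equals max(d, 2(d + μ(T)) − n) (where the maximum is taken over the integers). Here α(T) = n − μ(T). -/
open SimpleGraph

universe u
variable {V : Type*} {W : Type*}

/-- `ObtainedByContractions G H p` means that the graph `H` can be obtained from the graph `G`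
by a sequence of `p` edge contractions. -/
inductive ObtainedByContractions :
    {α : Type u} → SimpleGraph α → {β : Type u} → SimpleGraph β → ℕ → Prop
  | refl {α : Type u} (G : SimpleGraph α) : ObtainedByContractions G G 0
  | step {α β : Type u} (G : SimpleGraph α) (H : SimpleGraph β) (u v : α) (p : ℕ)
      (hadj : G.Adj u v) (h : ObtainedByContractions (G.contractEdge u v) H p) :
      ObtainedByContractions G H (p + 1)

namespace SimpleGraph

variable {G : SimpleGraph V}

lemma contractEdge_adj_iff {u v : V} {x y : {x : V // x ≠ u}} :
    (G.contractEdge u v).Adj x y ↔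
      x ≠ y ∧ (G.Adj x y ∨ (x.1 = v ∧ G.Adj u y) ∨ (y.1 = v ∧ G.Adj u x)) := Iff.rfl

/-! ### Basic API for indepNum and matchingNum -/

lemma isIndepSet_empty (G : SimpleGraph V) : G.IsIndepSet' (∅ : Set V) := Set.pairwise_empty _

lemma isMatchingSet_empty (G : SimpleGraph V) : G.IsMatchingSet (∅ : Set (Sym2 V)) :=
  ⟨Set.empty_subset _, Set.pairwise_empty _⟩

lemma indepNum_set_nonempty (G : SimpleGraph V) :
    {n | ∃ s : Set V, G.IsIndepSet' s ∧ s.ncard = n}.Nonempty :=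
  ⟨0, ∅, G.isIndepSet_empty, Set.ncard_empty _⟩

lemma matchingNum_set_nonempty (G : SimpleGraph V) :
    {n | ∃ M : Set (Sym2 V), G.IsMatchingSet M ∧ M.ncard = n}.Nonempty :=
  ⟨0, ∅, G.isMatchingSet_empty, Set.ncard_empty _⟩

lemma indepNum_bddAbove [Finite V] (G : SimpleGraph V) :
    BddAbove {n | ∃ s : Set V, G.IsIndepSet' s ∧ s.ncard = n} := by
  refine ⟨Nat.card V, ?_⟩
  rintro n ⟨s, -, rfl⟩
  rw [← Set.ncard_univ]
  exact Set.ncard_le_ncard (Set.subset_univ s) Set.finite_univ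

lemma matchingNum_bddAbove [Finite V] (G : SimpleGraph V) :
    BddAbove {n | ∃ M : Set (Sym2 V), G.IsMatchingSet M ∧ M.ncard = n} := by
  refine ⟨Nat.card (Sym2 V), ?_⟩
  rintro n ⟨M, -, rfl⟩
  rw [← Set.ncard_univ]
  exact Set.ncard_le_ncard (Set.subset_univ M) Set.finite_univ

lemma le_indepNum [Finite V] {s : Set V} (hs : G.IsIndepSet' s) : s.ncard ≤ G.indepNum' :=
  le_csSup G.indepNum_bddAbove ⟨s, hs, rfl⟩

lemma le_matchingNum [Finite V] {M : Set (Sym2 V)} (hM : G.IsMatchingSet M) :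
    M.ncard ≤ G.matchingNum :=
  le_csSup G.matchingNum_bddAbove ⟨M, hM, rfl⟩

lemma exists_indepSet_eq_indepNum [Finite V] (G : SimpleGraph V) :
    ∃ s : Set V, G.IsIndepSet' s ∧ s.ncard = G.indepNum' :=
  Nat.sSup_mem G.indepNum_set_nonempty G.indepNum_bddAbove

lemma exists_matchingSet_eq_matchingNum [Finite V] (G : SimpleGraph V) :
    ∃ M : Set (Sym2 V), G.IsMatchingSet M ∧ M.ncard = G.matchingNum :=
  Nat.sSup_mem G.matchingNum_set_nonempty G.matchingNum_bddAbove

lemma indepNum_le_of_le [Finite V] {k : ℕ} (h : ∀ s : Set V, G.IsIndepSet' s → s.ncard ≤ k) :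
    G.indepNum' ≤ k := by
  obtain ⟨s, hs, hcard⟩ := G.exists_indepSet_eq_indepNum
  rw [← hcard]; exact h s hs

lemma matchingNum_le_of_le [Finite V] {k : ℕ} (h : ∀ M, G.IsMatchingSet M → Set.ncard M ≤ k) :
    G.matchingNum ≤ k := by
  obtain ⟨M, hM, hcard⟩ := G.exists_matchingSet_eq_matchingNum
  rw [← hcard]; exact h M hM

lemma one_le_indepNum [Finite V] [Nonempty V] (G : SimpleGraph V) : 1 ≤ G.indepNum' := by
  obtain ⟨x⟩ := ‹Nonempty V›
  have := G.le_indepNum (s := {x}) (Set.pairwise_singleton x _)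
  simpa using this

lemma exists_pair (e : Sym2 V) : ∃ p : V × V, e = s(p.1, p.2) := by
  induction e using Sym2.ind with
  | _ a b => exact ⟨(a, b), rfl⟩

/-- Choice of an ordered representative of an unordered pair. -/
noncomputable def pairRep (e : Sym2 V) : V × V := Classical.choose (exists_pair e)

lemma pairRep_spec (e : Sym2 V) : e = s((pairRep e).1, (pairRep e).2) :=
  Classical.choose_spec (exists_pair e)

lemma pairRep_fst_mem (e : Sym2 V) : (pairRep e).1 ∈ e := by
  have := Sym2.mem_mk_left (pairRep e).1 (pairRep e).2
  rwa [← pairRep_spec e] at this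

lemma pairRep_snd_mem (e : Sym2 V) : (pairRep e).2 ∈ e := by
  have := Sym2.mem_mk_right (pairRep e).1 (pairRep e).2
  rwa [← pairRep_spec e] at this

lemma pairRep_ne {e : Sym2 V} (he : e ∈ G.edgeSet) : (pairRep e).1 ≠ (pairRep e).2 := by
  intro h
  apply G.not_isDiag_of_mem_edgeSet he
  rw [pairRep_spec e, Sym2.mk_isDiag_iff]
  exact h

lemma IsMatchingSet.disjoint {M : Set (Sym2 V)} (hM : G.IsMatchingSet M) {e f : Sym2 V}
    (he : e ∈ M) (hf : f ∈ M) (hne : e ≠ f) {x : V} (hx : x ∈ e) : x ∉ f :=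
  hM.2 he hf hne x hx

/-- For a matching `M`, the map sending `(e, b)` to an endpoint of `e` is injective. -/
lemma matching_pair_injective {M : Set (Sym2 V)} (hM : G.IsMatchingSet M) :
    Function.Injective (fun z : M × Bool =>
      if z.2 then (pairRep z.1.1).1 else (pairRep z.1.1).2) := by
  rintro ⟨⟨e, he⟩, b⟩ ⟨⟨f, hf⟩, c⟩ h
  simp only at h
  have hef : e = f := by
    by_contra hne
    have h1 : (if b then (pairRep e).1 else (pairRep e).2) ∈ e := by
      split <;> [exact pairRep_fst_mem e; exact pairRep_snd_mem e]
    have h2 : (if c then (pairRep f).1 else (pairRep f).2) ∈ f := by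
      split <;> [exact pairRep_fst_mem f; exact pairRep_snd_mem f]
    exact hM.disjoint he hf hne h1 (h ▸ h2)
  subst hef
  have hbc : b = c := by
    by_contra hbc
    have hne := pairRep_ne (hM.1 he)
    cases b <;> cases c <;> simp_all
  simp [hbc]

lemma IsMatchingSet.two_mul_ncard_le [Finite V] {M : Set (Sym2 V)}
    (hM : G.IsMatchingSet M) : 2 * M.ncard ≤ Nat.card V := by
  have := Nat.card_le_card_of_injective _ (matching_pair_injective hM)
  rwa [Nat.card_prod, Nat.card_coe_set_eq, (by simp : Nat.card Bool = 2), Nat.mul_comm] at this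

lemma two_mul_matchingNum_le [Finite V] (G : SimpleGraph V) :
    2 * G.matchingNum ≤ Nat.card V := by
  obtain ⟨M, hM, hcard⟩ := G.exists_matchingSet_eq_matchingNum
  rw [← hcard]; exact hM.two_mul_ncard_le

/-- If the matching does not cover all vertices, there is an uncovered vertex. -/
lemma exists_uncovered [Finite V] {M : Set (Sym2 V)} (hM : G.IsMatchingSet M)
    (h : 2 * M.ncard < Nat.card V) : ∃ w : V, ∀ e ∈ M, w ∉ e := by
  by_contra hc
  push_neg at hc
  have hsurj : Function.Surjective (fun z : M × Bool =>
      if z.2 then (pairRep z.1.1).1 else (pairRep z.1.1).2) := by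
    intro w
    obtain ⟨e, he, hwe⟩ := hc w
    rw [pairRep_spec e, Sym2.mem_iff] at hwe
    rcases hwe with rfl | rfl
    · exact ⟨(⟨e, he⟩, true), rfl⟩
    · exact ⟨(⟨e, he⟩, false), rfl⟩
  have := Nat.card_le_card_of_surjective _ hsurj
  rw [Nat.card_prod, Nat.card_coe_set_eq, (by simp : Nat.card Bool = 2)] at this
  omega

/-- General upper bound: `α + μ ≤ n`. -/
lemma indepNum_add_matchingNum_le [Finite V] (G : SimpleGraph V) :
    G.indepNum' + G.matchingNum ≤ Nat.card V := by
  obtain ⟨S, hS, hScard⟩ := G.exists_indepSet_eq_indepNum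
  obtain ⟨M, hM, hMcard⟩ := G.exists_matchingSet_eq_matchingNum
  -- for each matching edge pick an endpoint not in S
  have hpick : ∀ e : M, ∃ x, x ∈ (e : Sym2 V) ∧ x ∉ S := by
    rintro ⟨e, he⟩
    have hadj : G.Adj (pairRep e).1 (pairRep e).2 := by
      have := hM.1 he
      rwa [pairRep_spec e] at this
    by_cases h1 : (pairRep e).1 ∈ S
    · refine ⟨(pairRep e).2, pairRep_snd_mem e, fun h2 => ?_⟩
      exact hS h1 h2 hadj.ne hadj
    · exact ⟨(pairRep e).1, pairRep_fst_mem e, h1⟩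
  choose F hF1 hF2 using hpick
  have hinj : Function.Injective F := by
    rintro ⟨e, he⟩ ⟨f, hf⟩ h
    ext1
    by_contra hne
    exact hM.disjoint he hf hne (hF1 ⟨e, he⟩) (h ▸ hF1 ⟨f, hf⟩)
  have hrange : ∀ z, F z ∈ Sᶜ := fun z => hF2 z
  have : Nat.card M ≤ Sᶜ.ncard := by
    rw [← Nat.card_coe_set_eq]
    exact Nat.card_le_card_of_injective (fun z => ⟨F z, hrange z⟩)
      (fun a b h => hinj (by simpa using congrArg Subtype.val h))
  rw [← hScard, ← hMcard, ← Set.ncard_add_ncard_compl S, ← Nat.card_coe_set_eq M]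
  omega

end SimpleGraph

namespace SimpleGraph

variable {G : SimpleGraph V}

/-! ### Transfer lemmas -/

/-- Push an independent set forward along an adjacency-reflecting injection. -/
lemma IsIndepSet'.push {H : SimpleGraph W} {f : W → V} (hinj : Function.Injective f)
    (hrefl : ∀ a b, G.Adj (f a) (f b) → H.Adj a b) {s : Set W} (hs : H.IsIndepSet' s) :
    G.IsIndepSet' (f '' s) := by
  rintro _ ⟨a, ha, rfl⟩ _ ⟨b, hb, rfl⟩ hne hadj
  exact hs ha hb (fun h => hne (h ▸ rfl)) (hrefl a b hadj)

lemma indepNum_le_indepNum {H : SimpleGraph W} [Finite V] [Finite W] {f : W → V}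
    (hinj : Function.Injective f) (hrefl : ∀ a b, G.Adj (f a) (f b) → H.Adj a b) :
    H.indepNum' ≤ G.indepNum' := by
  obtain ⟨s, hs, hcard⟩ := H.exists_indepSet_eq_indepNum
  rw [← hcard, ← Set.ncard_image_of_injOn (hinj.injOn)]
  exact le_indepNum (hs.push hinj hrefl)

/-- Push a matching forward along an adjacency-preserving injection. -/
lemma IsMatchingSet.push {H : SimpleGraph W} {f : W → V} (hinj : Function.Injective f)
    (hpres : ∀ a b, H.Adj a b → G.Adj (f a) (f b)) {M : Set (Sym2 W)}
    (hM : H.IsMatchingSet M) : G.IsMatchingSet (Sym2.map f '' M) := by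
  constructor
  · rintro _ ⟨e, he, rfl⟩
    have := hM.1 he
    induction e using Sym2.ind with
    | _ a b => rw [Sym2.map_pair_eq]; exact hpres a b this
  · rintro _ ⟨e, he, rfl⟩ _ ⟨g, hg, rfl⟩ hne x hx1 hx2
    have hneg : e ≠ g := fun h => hne (h ▸ rfl)
    obtain ⟨a, ha, rfl⟩ := Sym2.mem_map.mp hx1
    obtain ⟨b, hb, hba⟩ := Sym2.mem_map.mp hx2
    exact hM.disjoint he hg hneg ha ((hinj hba) ▸ hb)

lemma matchingNum_le_matchingNum {H : SimpleGraph W} [Finite V] [Finite W] {f : W → V}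
    (hinj : Function.Injective f) (hpres : ∀ a b, H.Adj a b → G.Adj (f a) (f b)) :
    H.matchingNum ≤ G.matchingNum := by
  obtain ⟨M, hM, hcard⟩ := H.exists_matchingSet_eq_matchingNum
  rw [← hcard, ← Set.ncard_image_of_injOn ((Sym2.map.injective hinj).injOn)]
  exact le_matchingNum (hM.push hinj hpres)

/-- Lift a matching from `G` to a graph `H` on a subtype, provided all matched vertices
satisfy the predicate and `H` has at least the induced adjacencies. -/
lemma matching_lift {P : V → Prop} {H : SimpleGraph {x : V // P x}}
    (hsup : ∀ a b : {x : V // P x}, G.Adj a.1 b.1 → H.Adj a b)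
    {M : Set (Sym2 V)} (hM : G.IsMatchingSet M) (hP : ∀ e ∈ M, ∀ x ∈ e, P x) :
    ∃ M' : Set (Sym2 {x : V // P x}), H.IsMatchingSet M' ∧ M'.ncard = M.ncard := by
  classical
  set val : {x : V // P x} → V := Subtype.val with hval
  have hvinj : Function.Injective val := Subtype.val_injective
  refine ⟨{e' | Sym2.map val e' ∈ M}, ⟨?_, ?_⟩, ?_⟩
  · rintro e' he'
    induction e' using Sym2.ind with
    | _ a b =>
      have hmem : s(a.1, b.1) ∈ M := by rwa [← Sym2.map_pair_eq val a b]
      have hadj : G.Adj a.1 b.1 := hM.1 hmem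
      exact hsup a b hadj
  · rintro e' he' g' hg' hne x hx1 hx2
    have : Sym2.map val e' ≠ Sym2.map val g' := fun h => hne (Sym2.map.injective hvinj h)
    exact hM.disjoint he' hg' this (Sym2.mem_map.mpr ⟨x, hx1, rfl⟩)
      (Sym2.mem_map.mpr ⟨x, hx2, rfl⟩)
  · have himg : Sym2.map val '' {e' | Sym2.map val e' ∈ M} = M := by
      apply Set.Subset.antisymm
      · rintro _ ⟨e', he', rfl⟩; exact he'
      · intro e he
        induction e using Sym2.ind with
        | _ a b =>
          have hPa : P a := hP _ he a (Sym2.mem_mk_left a b)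
          have hPb : P b := hP _ he b (Sym2.mem_mk_right a b)
          exact ⟨s(⟨a, hPa⟩, ⟨b, hPb⟩), by rwa [Set.mem_setOf_eq, Sym2.map_pair_eq],
            by rw [Sym2.map_pair_eq]⟩
    conv_rhs => rw [← himg]
    rw [Set.ncard_image_of_injOn ((Sym2.map.injective hvinj).injOn)]

end SimpleGraph

namespace SimpleGraph

variable {G : SimpleGraph V}

/-! ### Leaf existence in finite acyclic graphs -/

lemma exists_leaf [Fintype V] (hG : G.IsAcyclic) {a₀ b₀ : V} (hab : G.Adj a₀ b₀) :
    ∃ u v, G.Adj u v ∧ ∀ w, G.Adj u w → w = v := by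
  classical
  set L : Set ℕ := {n | ∃ (a : V) (b : V) (p : G.Walk a b), p.IsPath ∧ p.length = n} with hL
  have hne : L.Nonempty := ⟨1, a₀, b₀, (Path.singleton hab).1, (Path.singleton hab).2, rfl⟩
  have hbdd : BddAbove L := by
    refine ⟨Fintype.card V, ?_⟩
    rintro n ⟨a, b, p, hp, rfl⟩
    exact le_of_lt hp.length_lt
  obtain ⟨a, b, p, hp, hlen⟩ := Nat.sSup_mem hne hbdd
  have hlen1 : 1 ≤ p.length := by
    have : (1 : ℕ) ∈ L := ⟨a₀, b₀, _, (Path.singleton hab).2, rfl⟩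
    have := le_csSup hbdd this
    omega
  -- p is nonempty, write p = cons h q
  cases p with
  | nil => simp at hlen1
  | @cons a c b h q =>
    refine ⟨a, c, h, fun w hw => ?_⟩
    by_cases hmem : w ∈ (Walk.cons h q).support
    · -- takeUntil is a path from a to w; by uniqueness it is the single edge
      have htu := hp.takeUntil hmem
      have huniq := isAcyclic_iff_path_unique.mp hG ⟨_, htu⟩ (Path.singleton hw)
      have heq : (Walk.cons h q).takeUntil w hmem = Walk.cons hw Walk.nil := by
        have := congrArg Subtype.val huniq
        simpa [Path.singleton] using this
      have hspec := (Walk.cons h q).take_spec hmem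
      rw [heq] at hspec
      have := congrArg (fun r => Walk.getVert r 1) hspec
      simpa using this
    · -- extend the path: contradiction with maximality
      have hcons : (Walk.cons hw.symm (Walk.cons h q)).IsPath := hp.cons hmem
      have : (Walk.cons h q).length + 1 ∈ L := ⟨w, b, _, hcons, by simp⟩
      have := le_csSup hbdd this
      omega

end SimpleGraph

namespace SimpleGraph

variable {G : SimpleGraph V}

/-! ### α + μ = n for forests -/

lemma IsAcyclic.comap' (hG : G.IsAcyclic) {f : W → V} (hinj : Function.Injective f) :
    (G.comap f).IsAcyclic := by
  intro v c hc
  have := hc.map (f := (Embedding.comap ⟨f, hinj⟩ G).toHom) hinj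
  exact hG _ this

lemma acyclic_card_le_aux (n : ℕ) :
    ∀ {V : Type u} [Finite V] (G : SimpleGraph V), Nat.card V = n → G.IsAcyclic →
      Nat.card V ≤ G.indepNum' + G.matchingNum := by
  induction n using Nat.strong_induction_on with
  | _ n IH =>
    intro V _ G hcard hG
    by_cases hE : ∃ a b, G.Adj a b
    · obtain ⟨a₀, b₀, hab⟩ := hE
      have : Fintype V := Fintype.ofFinite V
      obtain ⟨u, v, huv, hleaf⟩ := G.exists_leaf hG hab
      have huvne : u ≠ v := huv.ne
      -- the graph with u and v removed
      set P : V → Prop := fun x => x ≠ u ∧ x ≠ v with hP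
      set G' : SimpleGraph {x : V // P x} := G.comap Subtype.val with hG'
      have hG'acyclic : G'.IsAcyclic := hG.comap' Subtype.val_injective
      have hcard' : Nat.card {x : V // P x} = n - 2 := by
        have h1 : {x : V | P x} = ({u, v} : Set V)ᶜ := by
          ext x; simp [hP, not_or]
        have h2 : ({u, v} : Set V).ncard = 2 := Set.ncard_pair huvne
        have h3 := Set.ncard_add_ncard_compl ({u, v} : Set V)
        have h4 : Nat.card {x : V // P x} = ({x : V | P x}).ncard :=
          Nat.card_coe_set_eq _
        rw [h4, h1]
        omega
      have hn2 : 2 ≤ n := by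
        have h3 := Set.ncard_add_ncard_compl ({u, v} : Set V)
        rw [Set.ncard_pair huvne] at h3
        omega
      have hIH := IH (n - 2) (by omega) G' hcard' hG'acyclic
      rw [hcard'] at hIH
      -- α(G) ≥ α(G') + 1
      obtain ⟨S', hS', hS'card⟩ := G'.exists_indepSet_eq_indepNum
      have hSpush : G.IsIndepSet' (Subtype.val '' S') :=
        hS'.push Subtype.val_injective (fun a b h => h)
      have hunotmem : u ∉ Subtype.val '' S' := by
        rintro ⟨x, -, hx⟩; exact x.2.1 hx
      have hSins : G.IsIndepSet' (insert u (Subtype.val '' S')) := by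
        rw [IsIndepSet', Set.pairwise_insert]
        refine ⟨hSpush, ?_⟩
        rintro b ⟨x, hxS, rfl⟩ hne
        exact ⟨fun hadj => x.2.2 (hleaf _ hadj), fun hadj => x.2.2 (hleaf _ hadj.symm)⟩
      have halpha : G'.indepNum' + 1 ≤ G.indepNum' := by
        have h5 := le_indepNum hSins
        rwa [Set.ncard_insert_of_notMem hunotmem (Set.toFinite _),
          Set.ncard_image_of_injOn (Subtype.val_injective.injOn), hS'card] at h5
      -- μ(G) ≥ μ(G') + 1
      obtain ⟨M', hM', hM'card⟩ := G'.exists_matchingSet_eq_matchingNum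
      have hMpush : G.IsMatchingSet (Sym2.map Subtype.val '' M') :=
        hM'.push Subtype.val_injective (fun a b h => h)
      have huvnotmem : s(u, v) ∉ Sym2.map Subtype.val '' M' := by
        rintro ⟨e, -, he⟩
        have hmm : u ∈ Sym2.map Subtype.val e := he ▸ Sym2.mem_mk_left u v
        obtain ⟨x, -, hx⟩ := Sym2.mem_map.mp hmm
        exact x.2.1 hx
      have hMins : G.IsMatchingSet (insert s(u, v) (Sym2.map Subtype.val '' M')) := by
        constructor
        · rintro e he
          rcases Set.mem_insert_iff.mp he with rfl | he
          · exact huv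
          · exact hMpush.1 he
        · rw [Set.pairwise_insert]
          refine ⟨hMpush.2, ?_⟩
          rintro f ⟨e0, he0, rfl⟩ hne
          constructor
          · intro x hx hxf
            obtain ⟨y, -, hy⟩ := Sym2.mem_map.mp hxf
            rcases Sym2.mem_iff.mp hx with rfl | rfl
            · exact y.2.1 hy
            · exact y.2.2 hy
          · intro x hxf hx
            obtain ⟨y, -, hy⟩ := Sym2.mem_map.mp hxf
            rcases Sym2.mem_iff.mp hx with rfl | rfl
            · exact y.2.1 hy
            · exact y.2.2 hy
      have hmu : G'.matchingNum + 1 ≤ G.matchingNum := by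
        have h6 := le_matchingNum hMins
        rwa [Set.ncard_insert_of_notMem huvnotmem (Set.toFinite _),
          Set.ncard_image_of_injOn ((Sym2.map.injective Subtype.val_injective).injOn),
          hM'card] at h6
      omega
    · push_neg at hE
      have : G.IsIndepSet' (Set.univ : Set V) := fun a _ b _ _ h => hE a b h
      have h1 := le_indepNum this
      rw [Set.ncard_univ] at h1
      omega

/-- Gallai–König for forests: `α + μ = n`. -/
lemma IsAcyclic.indepNum_add_matchingNum [Finite V] (hG : G.IsAcyclic) :
    G.indepNum' + G.matchingNum = Nat.card V :=
  le_antisymm G.indepNum_add_matchingNum_le (acyclic_card_le_aux (Nat.card V) G rfl hG)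

end SimpleGraph

namespace SimpleGraph

variable {G : SimpleGraph V}

/-! ### Contraction lemmas -/

lemma card_contract_vertexType [Finite V] (u : V) :
    Nat.card {x : V // x ≠ u} + 1 = Nat.card V := by
  have h1 : Nat.card {x : V // x ≠ u} = ({x : V | x ≠ u}).ncard := Nat.card_coe_set_eq _
  have h2 : {x : V | x ≠ u} = ({u} : Set V)ᶜ := by ext x; simp
  have h3 := Set.ncard_add_ncard_compl ({u} : Set V)
  rw [Set.ncard_singleton] at h3
  rw [h1, h2]
  omega

open Classical in
/-- The retraction map sending `u` to `v`. -/
noncomputable def contractRetract (huv : G.Adj u v) : V → {x : V // x ≠ u} := fun x =>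
  if h : x = u then ⟨v, huv.ne'⟩ else ⟨x, h⟩

lemma contractRetract_of_ne (huv : G.Adj u v) {x : V} (hx : x ≠ u) :
    contractRetract huv x = ⟨x, hx⟩ := by
  rw [contractRetract]
  exact dif_neg hx

lemma contractRetract_self (huv : G.Adj u v) :
    contractRetract huv u = ⟨v, huv.ne'⟩ := by
  rw [contractRetract]
  exact dif_pos rfl

lemma contractRetract_adj (huv : G.Adj u v) {a b : V} (hab : G.Adj a b) :
    (G.contractEdge u v).Reachable (contractRetract huv a) (contractRetract huv b) := by
  by_cases ha : a = u
  · have hub : G.Adj u b := ha ▸ hab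
    have hb : b ≠ u := hub.ne'
    rw [ha, contractRetract_self, contractRetract_of_ne huv hb]
    by_cases hbv : b = v
    · rw [show (⟨b, hb⟩ : {x : V // x ≠ u}) = ⟨v, huv.ne'⟩ from Subtype.ext hbv]
    · exact Adj.reachable (show (G.contractEdge u v).Adj ⟨v, huv.ne'⟩ ⟨b, hb⟩ from
        contractEdge_adj_iff.mpr ⟨fun h => hbv (congrArg Subtype.val h).symm, Or.inr (Or.inl ⟨rfl, hub⟩)⟩)
  · by_cases hb : b = u
    · have hua : G.Adj u a := hb ▸ hab.symm
      rw [hb, contractRetract_self, contractRetract_of_ne huv ha]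
      by_cases hav : a = v
      · rw [show (⟨a, ha⟩ : {x : V // x ≠ u}) = ⟨v, huv.ne'⟩ from Subtype.ext hav]
      · exact Adj.reachable (show (G.contractEdge u v).Adj ⟨a, ha⟩ ⟨v, huv.ne'⟩ from
          contractEdge_adj_iff.mpr ⟨fun h => hav (congrArg Subtype.val h), Or.inr (Or.inr ⟨rfl, hua⟩)⟩)
    · rw [contractRetract_of_ne huv ha, contractRetract_of_ne huv hb]
      exact Adj.reachable (show (G.contractEdge u v).Adj ⟨a, ha⟩ ⟨b, hb⟩ from
        contractEdge_adj_iff.mpr ⟨fun h => hab.ne (congrArg Subtype.val h), Or.inl hab⟩)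

lemma contractRetract_reachable (huv : G.Adj u v) {a b : V} (h : G.Reachable a b) :
    (G.contractEdge u v).Reachable (contractRetract huv a) (contractRetract huv b) := by
  obtain ⟨w⟩ := h
  induction w with
  | nil => rfl
  | cons hadj _ ih => exact (contractRetract_adj huv hadj).trans ih

lemma Connected.contractEdge (hG : G.Connected) (huv : G.Adj u v) :
    (G.contractEdge u v).Connected := by
  rw [connected_iff]
  refine ⟨fun x y => ?_, ⟨⟨v, huv.ne'⟩⟩⟩
  have := contractRetract_reachable huv (hG.preconnected x.1 y.1)
  rwa [contractRetract_of_ne huv x.2, contractRetract_of_ne huv y.2,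
    Subtype.coe_eta, Subtype.coe_eta] at this

/-- Every edge of the contraction is the image of an edge of `G` other than `s(u,v)`. -/
lemma contract_edgeSet_subset (huv : G.Adj u v) :
    (G.contractEdge u v).edgeSet ⊆
      Sym2.map (contractRetract huv) '' (G.edgeSet \ {s(u, v)}) := by
  intro e' he'
  induction e' using Sym2.ind with
  | _ x y =>
    obtain ⟨hne, hcase⟩ := contractEdge_adj_iff.mp he'
    have hxy : x.1 ≠ y.1 := fun h => hne (Subtype.ext h)
    rcases hcase with h | ⟨hxv, h⟩ | ⟨hyv, h⟩
    · refine ⟨s(x.1, y.1), ⟨h, ?_⟩, ?_⟩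
      · simp only [Set.mem_singleton_iff, Sym2.eq_iff]
        rintro (⟨h1, h2⟩ | ⟨h1, h2⟩)
        · exact x.2 h1
        · exact y.2 h2
      · rw [Sym2.map_pair_eq, contractRetract_of_ne huv x.2, contractRetract_of_ne huv y.2]
    · have hyv : y.1 ≠ v := fun hy => hxy (hxv.trans hy.symm)
      have hx' : x = ⟨v, huv.ne'⟩ := Subtype.ext hxv
      refine ⟨s(u, y.1), ⟨h, ?_⟩, ?_⟩
      · simp only [Set.mem_singleton_iff, Sym2.eq_iff]
        rintro (⟨h1, h2⟩ | ⟨h1, h2⟩)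
        · exact hyv h2
        · exact huv.ne h1
      · rw [hx', Sym2.map_pair_eq, contractRetract_self, contractRetract_of_ne huv y.2]
    · have hxv : x.1 ≠ v := fun hx => hxy (hx.trans hyv.symm)
      have hy' : y = ⟨v, huv.ne'⟩ := Subtype.ext hyv
      refine ⟨s(u, x.1), ⟨h, ?_⟩, ?_⟩
      · simp only [Set.mem_singleton_iff, Sym2.eq_iff]
        rintro (⟨h1, h2⟩ | ⟨h1, h2⟩)
        · exact hxv h2
        · exact huv.ne h1
      · rw [hy', Sym2.map_pair_eq, contractRetract_self, contractRetract_of_ne huv x.2,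
          Sym2.eq_swap]

lemma contract_edgeSet_ncard_le [Finite V] (huv : G.Adj u v) :
    (G.contractEdge u v).edgeSet.ncard + 1 ≤ G.edgeSet.ncard := by
  have h1 := Set.ncard_le_ncard (contract_edgeSet_subset huv) (Set.toFinite _)
  have h2 := Set.ncard_image_le (s := G.edgeSet \ {s(u, v)})
    (f := Sym2.map (contractRetract huv)) (Set.toFinite _)
  have h3 := Set.ncard_diff_singleton_add_one (G.mem_edgeSet.mpr huv) (Set.toFinite _)
  omega

end SimpleGraph

namespace SimpleGraph

variable {G : SimpleGraph V}

/-! ### Edge counts for connected graphs; trees are preserved by contraction -/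

lemma deleteNonBridge_edgeSet {e : Sym2 V} (he : e ∈ G.edgeSet) :
    (G \ fromEdgeSet {e}).edgeSet = G.edgeSet \ {e} := by
  rw [edgeSet_sdiff, edgeSet_fromEdgeSet]
  ext f
  simp only [Set.mem_diff, Set.mem_singleton_iff, Set.mem_setOf_eq]
  constructor
  · rintro ⟨hf, h2⟩
    refine ⟨hf, fun hfe => h2 ⟨hfe, ?_⟩⟩
    subst hfe
    exact G.not_isDiag_of_mem_edgeSet hf
  · rintro ⟨hf, h2⟩
    exact ⟨hf, fun h3 => h2 h3.1⟩

lemma Connected.deleteNonBridge (hG : G.Connected) {e : Sym2 V} (he : e ∈ G.edgeSet)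
    (hb : ¬G.IsBridge e) : (G \ fromEdgeSet {e}).Connected := by
  induction e using Sym2.ind with
  | _ a b =>
    have hab : G.Adj a b := G.mem_edgeSet.mp he
    rw [isBridge_iff] at hb
    push_neg at hb
    have hre : (G \ fromEdgeSet {s(a, b)}).Reachable a b := hb
    have key : ∀ {p q : V}, G.Adj p q → (G \ fromEdgeSet {s(a, b)}).Reachable p q := by
      intro p q hpq
      by_cases hsame : s(p, q) = s(a, b)
      · rcases Sym2.eq_iff.mp hsame with ⟨rfl, rfl⟩ | ⟨rfl, rfl⟩
        · exact hre
        · exact hre.symm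
      · refine Adj.reachable ?_
        rw [sdiff_adj]
        refine ⟨hpq, fun hf => ?_⟩
        rw [fromEdgeSet_adj] at hf
        exact hsame hf.1
    rw [connected_iff]
    refine ⟨fun x y => ?_, hG.nonempty⟩
    obtain ⟨w⟩ := hG.preconnected x y
    clear he hb
    induction w with
    | nil => rfl
    | cons hadj _ ih => exact (key hadj).trans ih

lemma exists_nonBridge (hac : ¬G.IsAcyclic) :
    ∃ e ∈ G.edgeSet, ¬G.IsBridge e := by
  rw [IsAcyclic] at hac
  push_neg at hac
  obtain ⟨x, c, hc⟩ := hac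
  have hne : c.edges ≠ [] := by
    intro h
    have h1 := hc.three_le_length
    have h2 := c.length_edges
    rw [h, List.length_nil] at h2
    omega
  refine ⟨c.edges.head hne, c.edges_subset_edgeSet (List.head_mem hne), fun hb => ?_⟩
  exact (isBridge_iff_mem_and_forall_cycle_notMem (c.edges_subset_edgeSet (List.head_mem hne))).mp hb c hc (List.head_mem hne)

lemma IsTree.ncard_edgeSet [Finite V] (hT : G.IsTree) :
    G.edgeSet.ncard + 1 = Nat.card V := by
  have : Fintype V := Fintype.ofFinite V
  have : Fintype G.edgeSet := Fintype.ofFinite _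
  have h := hT.card_edgeFinset
  have h2 : G.edgeFinset.card = G.edgeSet.ncard := (Set.ncard_eq_toFinset_card' _).symm
  rwa [h2, ← Nat.card_eq_fintype_card] at h

lemma connected_card_le_aux (k : ℕ) :
    ∀ {V : Type u} [Finite V] (G : SimpleGraph V), G.edgeSet.ncard = k → G.Connected →
      Nat.card V ≤ k + 1 := by
  induction k using Nat.strong_induction_on with
  | _ k IH =>
    intro V _ G hk hG
    by_cases hac : G.IsAcyclic
    · have hT : G.IsTree := ⟨hG, hac⟩
      have := hT.ncard_edgeSet
      omega
    · obtain ⟨e, he, hb⟩ := exists_nonBridge hac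
      have hk1 : 1 ≤ k := by
        rw [← hk]
        exact (Set.ncard_pos (Set.toFinite _)).mpr ⟨e, he⟩
      have hE : (G \ fromEdgeSet {e}).edgeSet.ncard = k - 1 := by
        rw [deleteNonBridge_edgeSet he]
        have := Set.ncard_diff_singleton_add_one he (Set.toFinite _)
        omega
      have := IH (k - 1) (by omega) _ hE (hG.deleteNonBridge he hb)
      omega

lemma Connected.card_le_ncard_edgeSet [Finite V] (hG : G.Connected) :
    Nat.card V ≤ G.edgeSet.ncard + 1 :=
  connected_card_le_aux _ G rfl hG

lemma Connected.isTree_of_ncard_le [Finite V] (hG : G.Connected)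
    (h : G.edgeSet.ncard + 1 ≤ Nat.card V) : G.IsTree := by
  refine ⟨hG, ?_⟩
  by_contra hac
  obtain ⟨e, he, hb⟩ := exists_nonBridge hac
  have hk1 : 1 ≤ G.edgeSet.ncard := (Set.ncard_pos (Set.toFinite _)).mpr ⟨e, he⟩
  have hE : (G \ fromEdgeSet {e}).edgeSet.ncard = G.edgeSet.ncard - 1 := by
    rw [deleteNonBridge_edgeSet he]
    have := Set.ncard_diff_singleton_add_one he (Set.toFinite _)
    omega
  have := (hG.deleteNonBridge he hb).card_le_ncard_edgeSet
  omega

lemma IsTree.contractEdge [Finite V] (hT : G.IsTree) (huv : G.Adj u v) :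
    (G.contractEdge u v).IsTree := by
  have hconn := hT.isConnected.contractEdge huv
  refine hconn.isTree_of_ncard_le ?_
  have h1 := contract_edgeSet_ncard_le huv
  have h2 := hT.ncard_edgeSet
  have h3 := card_contract_vertexType (V := V) u
  omega

/-! ### Independence and matching numbers under contraction -/

lemma indepNum_le_contract [Finite V] (huv : G.Adj u v) :
    G.indepNum' ≤ (G.contractEdge u v).indepNum' + 1 := by
  obtain ⟨S, hS, hScard⟩ := G.exists_indepSet_eq_indepNum
  -- find a large independent set avoiding u and v
  obtain ⟨S₀, hS₀, hS₀u, hS₀v, hS₀card⟩ :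
      ∃ S₀ : Set V, G.IsIndepSet' S₀ ∧ u ∉ S₀ ∧ v ∉ S₀ ∧ S.ncard ≤ S₀.ncard + 1 := by
    by_cases hu : u ∈ S
    · have hv : v ∉ S := fun hv => hS hu hv huv.ne huv
      refine ⟨S \ {u}, hS.mono Set.diff_subset, by simp, fun h => hv h.1, ?_⟩
      have := Set.ncard_diff_singleton_add_one hu (Set.toFinite _)
      omega
    · by_cases hv : v ∈ S
      · refine ⟨S \ {v}, hS.mono Set.diff_subset, fun h => hu h.1, by simp, ?_⟩
        have := Set.ncard_diff_singleton_add_one hv (Set.toFinite _)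
        omega
      · exact ⟨S, hS, hu, hv, by omega⟩
  set S' : Set {x : V // x ≠ u} := {x | x.1 ∈ S₀} with hS'def
  have hS' : (G.contractEdge u v).IsIndepSet' S' := by
    intro x hx y hy hne hadj
    obtain ⟨hne', hcase⟩ := contractEdge_adj_iff.mp hadj
    rcases hcase with h | ⟨hxv, -⟩ | ⟨hyv, -⟩
    · exact hS₀ hx hy (fun h' => hne (Subtype.ext h')) h
    · exact hS₀v (hxv ▸ hx)
    · exact hS₀v (hyv ▸ hy)
  have himg : Subtype.val '' S' = S₀ := by
    ext x
    constructor
    · rintro ⟨y, hy, rfl⟩; exact hy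
    · intro hx
      exact ⟨⟨x, fun h => hS₀u (h ▸ hx)⟩, hx, rfl⟩
  have hcard' : S'.ncard = S₀.ncard := by
    rw [← himg, Set.ncard_image_of_injOn (Subtype.val_injective.injOn)]
  have := le_indepNum hS'
  omega

lemma le_matchingNum_contract [Finite V] (huv : G.Adj u v) {M : Set (Sym2 V)}
    (hM : G.IsMatchingSet M) (havoid : ∀ e ∈ M, ∀ x ∈ e, x ≠ u) :
    M.ncard ≤ (G.contractEdge u v).matchingNum := by
  obtain ⟨M', hM', hM'card⟩ := matching_lift (P := fun x => x ≠ u)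
    (H := G.contractEdge u v)
    (fun a b h => contractEdge_adj_iff.mpr ⟨fun h' => h.ne (congrArg Subtype.val h'), Or.inl h⟩) hM havoid
  rw [← hM'card]
  exact le_matchingNum hM'

end SimpleGraph

namespace SimpleGraph

variable {G : SimpleGraph V}

lemma matchingNum_contract_le_of_tree [Finite V] (hT : G.IsTree) (huv : G.Adj u v) :
    (G.contractEdge u v).matchingNum ≤ G.matchingNum := by
  have hT' := hT.contractEdge huv
  have h1 := hT'.IsAcyclic.indepNum_add_matchingNum
  have h2 := hT.IsAcyclic.indepNum_add_matchingNum
  have h3 := indepNum_le_contract huv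
  have h4 := card_contract_vertexType (V := V) u
  have h5 := (G.contractEdge u v).indepNum_add_matchingNum_le
  omega

lemma exists_adj_of_two_le_card [Finite V] (hG : G.Connected) (h2 : 2 ≤ Nat.card V) (w : V) :
    ∃ z, G.Adj w z := by
  have : Nontrivial V := Finite.one_lt_card_iff_nontrivial.mp h2
  obtain ⟨y, hy⟩ := exists_ne w
  obtain ⟨p⟩ := hG.preconnected w y
  cases p with
  | nil => exact (hy rfl).elim
  | cons h _ => exact ⟨_, h⟩

end SimpleGraph

lemma obc_card : ∀ {α : Type u} {G : SimpleGraph α} {β : Type u} {H : SimpleGraph β} {p : ℕ},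
    ObtainedByContractions G H p → Finite α → (Finite β ∧ Nat.card β + p = Nat.card α) := by
  intro α G β H p h
  induction h with
  | refl G => exact fun hf => ⟨hf, by omega⟩
  | step G H u v p hadj h ih =>
    intro hf
    have hsub : Finite {x // x ≠ u} := Subtype.finite
    obtain ⟨hβ, hcard⟩ := ih hsub
    have := SimpleGraph.card_contract_vertexType (V := _) u
    exact ⟨hβ, by omega⟩

lemma obc_indepNum : ∀ {α : Type u} {G : SimpleGraph α} {β : Type u} {H : SimpleGraph β} {p : ℕ},
    ObtainedByContractions G H p → Finite α → G.indepNum' ≤ H.indepNum' + p := by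
  intro α G β H p h
  induction h with
  | refl G => exact fun _ => by omega
  | step G H u v p hadj h ih =>
    intro hf
    have hsub : Finite {x // x ≠ u} := Subtype.finite
    have h1 := SimpleGraph.indepNum_le_contract hadj
    have h2 := ih hsub
    omega

/-- Main construction: contracting down to reduce the independence number by exactly `d`. -/
lemma obc_construct (m : ℕ) :
    ∀ {V : Type u} [Finite V] (G : SimpleGraph V), G.IsTree → Nat.card V = m →
      ∀ d : ℕ, d + 1 ≤ G.indepNum' →
      ∃ (W : Type u) (H : SimpleGraph W) (p : ℕ),
        ObtainedByContractions G H p ∧ H.IsTree ∧ H.indepNum' + d = G.indepNum' ∧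
        (p : ℤ) = max (d : ℤ) (2 * ((d : ℤ) + (G.matchingNum : ℤ)) - (m : ℤ)) := by
  induction m using Nat.strong_induction_on with
  | _ m IH =>
    intro V _ G hG hm d hd
    have hαμ : G.indepNum' + G.matchingNum = m := by
      rw [← hm]; exact hG.IsAcyclic.indepNum_add_matchingNum
    have h2μ : 2 * G.matchingNum ≤ m := by
      rw [← hm]; exact G.two_mul_matchingNum_le
    rcases d with _ | d'
    · refine ⟨V, G, 0, ObtainedByContractions.refl G, hG, by omega, ?_⟩
      have hμle : 2 * ((0 : ℤ) + (G.matchingNum : ℤ)) - (m : ℤ) ≤ 0 := by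
        have : (2 * G.matchingNum : ℤ) ≤ (m : ℤ) := by exact_mod_cast h2μ
        omega
      simp only [Nat.cast_zero]
      rw [max_eq_left hμle]
    · -- d = d' + 1 ≥ 1
      set d := d' + 1 with hddef
      obtain ⟨M, hM, hMcard⟩ := G.exists_matchingSet_eq_matchingNum
      have hm2 : 2 ≤ m := by omega
      by_cases hexp : 2 * G.matchingNum < m
      · -- there is an exposed vertex
        obtain ⟨w, hw⟩ := SimpleGraph.exists_uncovered hM (by rw [hm, hMcard]; omega)
        obtain ⟨z, hwz⟩ := SimpleGraph.exists_adj_of_two_le_card hG.isConnected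
          (by omega) w
        have hT' := hG.contractEdge hwz
        have hcard' : Nat.card {x : V // x ≠ w} = m - 1 := by
          have := SimpleGraph.card_contract_vertexType (V := V) w
          omega
        have hμ' : (G.contractEdge w z).matchingNum = G.matchingNum := by
          have hle := SimpleGraph.matchingNum_contract_le_of_tree hG hwz
          have hge := SimpleGraph.le_matchingNum_contract hwz hM
            (fun e he x hx hxw => hw e he (hxw ▸ hx))
          omega
        have hα'μ' : (G.contractEdge w z).indepNum' + (G.contractEdge w z).matchingNum
            = m - 1 := by
          rw [← hcard']; exact hT'.IsAcyclic.indepNum_add_matchingNum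
        have hα' : (G.contractEdge w z).indepNum' + 1 = G.indepNum' := by omega
        obtain ⟨W, H, p', hchain, hHtree, hHα, hp'⟩ := IH (m - 1) (by omega)
          (G.contractEdge w z) hT' hcard' d' (by omega)
        refine ⟨W, H, p' + 1, ObtainedByContractions.step G H w z p' hwz hchain,
          hHtree, by omega, ?_⟩
        rw [hμ'] at hp'
        have hcast : ((m - 1 : ℕ) : ℤ) = (m : ℤ) - 1 := by
          have : 1 ≤ m := by omega
          omega
        push_cast [hp', hcast]
        rw [← max_add_add_right]
        congr 1
        rw [hddef]; push_cast
        ring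
      · -- perfect matching: 2μ = m
        have hperf : 2 * G.matchingNum = m := by omega
        have hα : G.indepNum' = G.matchingNum := by omega
        have hμ1 : 1 ≤ G.matchingNum := by omega
        have hMne : M.Nonempty := by
          rw [← Set.ncard_pos (Set.toFinite _), hMcard]; omega
        obtain ⟨e₀, he₀⟩ := hMne
        set a := (SimpleGraph.pairRep e₀).1 with hadef
        set b := (SimpleGraph.pairRep e₀).2 with hbdef
        have hab : G.Adj a b := by
          have := hM.1 he₀
          rwa [SimpleGraph.pairRep_spec e₀] at this
        have hT' := hG.contractEdge hab
        have hcard' : Nat.card {x : V // x ≠ a} = m - 1 := by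
          have := SimpleGraph.card_contract_vertexType (V := V) a
          omega
        -- μ(G') = μ - 1
        have hM'match : G.IsMatchingSet (M \ {e₀}) :=
          ⟨fun e he => hM.1 he.1, hM.2.mono Set.diff_subset⟩
        have havoid : ∀ e ∈ M \ {e₀}, ∀ x ∈ e, x ≠ a := by
          rintro e ⟨he, hne⟩ x hx rfl
          exact hM.disjoint he₀ he (fun h => hne (by simp [← h]))
            (SimpleGraph.pairRep_fst_mem e₀) hx
        have hge := SimpleGraph.le_matchingNum_contract hab hM'match havoid
        have hdiffcard : (M \ {e₀}).ncard = G.matchingNum - 1 := by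
          have := Set.ncard_diff_singleton_add_one he₀ (Set.toFinite _)
          omega
        have h2μ' := (G.contractEdge a b).two_mul_matchingNum_le
        rw [hcard'] at h2μ'
        have hμ' : (G.contractEdge a b).matchingNum = G.matchingNum - 1 := by omega
        have hα'μ' : (G.contractEdge a b).indepNum' + (G.contractEdge a b).matchingNum
            = m - 1 := by
          rw [← hcard']; exact hT'.IsAcyclic.indepNum_add_matchingNum
        have hα' : (G.contractEdge a b).indepNum' = G.indepNum' := by omega
        obtain ⟨W, H, p', hchain, hHtree, hHα, hp'⟩ := IH (m - 1) (by omega)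
          (G.contractEdge a b) hT' hcard' d (by omega)
        refine ⟨W, H, p' + 1, ObtainedByContractions.step G H a b p' hab hchain,
          hHtree, by omega, ?_⟩
        rw [hμ'] at hp'
        -- integer arithmetic: p' = 2d - 1, p = 2d
        have hmz : (m : ℤ) = 2 * (G.matchingNum : ℤ) := by exact_mod_cast hperf.symm
        have hμz : ((G.matchingNum - 1 : ℕ) : ℤ) = (G.matchingNum : ℤ) - 1 := by
          omega
        have hmz1 : ((m - 1 : ℕ) : ℤ) = (m : ℤ) - 1 := by omega
        have hdz : 1 ≤ (d : ℤ) := by exact_mod_cast Nat.one_le_iff_ne_zero.mpr (by omega)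
        rw [hμz, hmz1] at hp'
        have hp'val : (p' : ℤ) = 2 * (d : ℤ) - 1 := by
          rw [hp', max_eq_right (by omega)]
          omega
        push_cast [hp'val]
        rw [max_eq_right (by omega)]
        omega

/-- For a tree `T` on `n ≥ 1` vertices and `d ≥ 0`: a tree `T''` with
`α(T'') ≤ α(T) - d` can be obtained from `T` by contractions iff `d ≤ α(T) - 1`; in that case
the minimum number of contractions needed equals `max(d, 2(d + μ(T)) - n)` (maximum over the
integers). Moreover `α(T) = n - μ(T)`. -/
theorem stmt14 {V : Type u} [Fintype V] (T : SimpleGraph V) (hT : T.IsTree)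
    (n : ℕ) (hn : Fintype.card V = n) (hn1 : 1 ≤ n) (d : ℕ) :
    ((∃ (W : Type u) (T'' : SimpleGraph W) (p : ℕ),
        ObtainedByContractions T T'' p ∧ T''.IsTree ∧ T''.indepNum' ≤ T.indepNum' - d) ↔
      d ≤ T.indepNum' - 1) ∧
    (d ≤ T.indepNum' - 1 →
      ∃ p₀ : ℕ,
        IsLeast {p : ℕ | ∃ (W : Type u) (T'' : SimpleGraph W),
            ObtainedByContractions T T'' p ∧ T''.IsTree ∧ T''.indepNum' ≤ T.indepNum' - d} p₀ ∧
        (p₀ : ℤ) = max (d : ℤ) (2 * ((d : ℤ) + (T.matchingNum : ℤ)) - (n : ℤ))) ∧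
    T.indepNum' = n - T.matchingNum := by
  have hncard : Nat.card V = n := by rw [Nat.card_eq_fintype_card, hn]
  have hαμ : T.indepNum' + T.matchingNum = n := by
    rw [← hncard]; exact hT.IsAcyclic.indepNum_add_matchingNum
  haveI hNV : Nonempty V := hT.isConnected.nonempty
  have hα1 : 1 ≤ T.indepNum' := T.one_le_indepNum
  refine ⟨⟨?_, ?_⟩, ?_, by omega⟩
  · -- existence → d ≤ α - 1
    rintro ⟨W, T'', p, hchain, htree, hle⟩
    obtain ⟨hWfin, hWcard⟩ := obc_card hchain inferInstance
    haveI := hWfin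
    haveI : Nonempty W := htree.isConnected.nonempty
    have hα''1 : 1 ≤ T''.indepNum' := T''.one_le_indepNum
    omega
  · -- d ≤ α - 1 → existence
    intro hd
    have hd' : d + 1 ≤ T.indepNum' := by omega
    obtain ⟨W, H, p, hchain, htree, heq, -⟩ := obc_construct n T hT hncard d hd'
    exact ⟨W, H, p, hchain, htree, by omega⟩
  · -- minimality
    intro hd
    have hd' : d + 1 ≤ T.indepNum' := by omega
    obtain ⟨W, H, p₀, hchain, htree, heq, hp₀⟩ := obc_construct n T hT hncard d hd'
    refine ⟨p₀, ⟨⟨W, H, hchain, htree, by omega⟩, ?_⟩, hp₀⟩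
    rintro p ⟨W', T'', hchain', htree', hle⟩
    obtain ⟨hW'fin, hW'card⟩ := obc_card hchain' inferInstance
    haveI := hW'fin
    haveI : Nonempty W' := htree'.isConnected.nonempty
    have h1 : T.indepNum' ≤ T''.indepNum' + p := obc_indepNum hchain' inferInstance
    have h2 : T''.indepNum' + T''.matchingNum = Nat.card W' :=
      htree'.IsAcyclic.indepNum_add_matchingNum
    have h3 : 2 * T''.matchingNum ≤ Nat.card W' := T''.two_mul_matchingNum_le
    have hdp : d ≤ p := by omega
    have hnp : 2 * (d + T.matchingNum) ≤ p + n := by omega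
    have hz1 : (d : ℤ) ≤ (p : ℤ) := by exact_mod_cast hdp
    have hz2 : 2 * ((d : ℤ) + (T.matchingNum : ℤ)) - (n : ℤ) ≤ (p : ℤ) := by
      have : (2 * (d + T.matchingNum) : ℤ) ≤ (p : ℤ) + (n : ℤ) := by exact_mod_cast hnp
      omega
    have : (p₀ : ℤ) ≤ (p : ℤ) := by
      rw [hp₀]
      exact max_le hz1 hz2
    exact_mod_cast this
end

section
/- Let G be a finite simple graph, let ℓ ≥ 1 be an integer, and let G' = 2G ⊕ K_{ℓ+1} be the disjoint union of two copies of G and a complete graph on ℓ + 1 vertices. Then ω(G) ≤ ℓ if and only if there exists an edge e of G' such that ω(G'/e) ≤ ω(G') − 1. -/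
open SimpleGraph

universe u
variable {V : Type*} {W : Type*}

section helpers

variable {α β : Type*}

lemma cliquePush [DecidableEq β] {A : SimpleGraph α} {B : SimpleGraph β} (f : α → β)
    (hinj : Function.Injective f) (hadj : ∀ a b, A.Adj a b → B.Adj (f a) (f b))
    {t : Finset α} (ht : A.IsClique (t : Set α)) :
    B.IsClique ((t.image f : Finset β) : Set β) := by
  rw [Finset.coe_image]
  rintro _ ⟨a, ha, rfl⟩ _ ⟨b, hb, rfl⟩ hne
  exact hadj a b (ht ha hb (fun h => hne (by rw [h])))

lemma cliquePull [DecidableEq α] [DecidableEq β] {A : SimpleGraph α} {B : SimpleGraph β} (f : α → β)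
    (hinj : Function.Injective f) (hadj : ∀ a b, B.Adj (f a) (f b) → A.Adj a b)
    {s : Finset β} (hs : B.IsClique (s : Set β)) (hmem : ∀ x ∈ s, ∃ a, f a = x) :
    ∃ t : Finset α, A.IsClique (t : Set α) ∧ t.card = s.card := by
  refine ⟨s.preimage f hinj.injOn, ?_, ?_⟩
  · intro a ha b hb hne
    simp only [Finset.coe_preimage, Set.mem_preimage, Finset.mem_coe] at ha hb
    exact hadj a b (hs ha hb (fun h => hne (hinj h)))
  · have himg : (s.preimage f hinj.injOn).image f = s := by
      ext x
      simp only [Finset.mem_image, Finset.mem_preimage]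
      constructor
      · rintro ⟨a, ha, rfl⟩; exact ha
      · intro hx; obtain ⟨a, rfl⟩ := hmem x hx; exact ⟨a, hx, rfl⟩
    calc (s.preimage f hinj.injOn).card
        = ((s.preimage f hinj.injOn).image f).card :=
          (Finset.card_image_of_injective _ hinj).symm
      _ = s.card := by rw [himg]

lemma sum_clique_cases {A : SimpleGraph α} {B : SimpleGraph β} {s : Finset (α ⊕ β)}
    (hs : (A ⊕g B).IsClique (s : Set (α ⊕ β))) :
    (∀ x ∈ s, ∃ a, x = Sum.inl a) ∨ (∀ x ∈ s, ∃ b, x = Sum.inr b) := by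
  by_contra h
  push_neg at h
  obtain ⟨⟨x, hx, hx'⟩, ⟨y, hy, hy'⟩⟩ := h
  cases x with
  | inl a => exact hx' a rfl
  | inr b =>
    cases y with
    | inr b' => exact hy' b' rfl
    | inl a =>
      have hne : (Sum.inr b : α ⊕ β) ≠ Sum.inl a := by simp
      have := hs hx hy hne
      simp [SimpleGraph.sum_adj] at this

/-- Every clique of `(G ⊕g G) ⊕g K_n` either has size at most `ω(G)` or lies inside the
complete part. -/
lemma hub_aux {V : Type*} [Fintype V] [DecidableEq V] (G : SimpleGraph V) {n : ℕ}
    {s : Finset ((V ⊕ V) ⊕ Fin n)}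
    (hs : ((G ⊕g G) ⊕g completeGraph (Fin n)).IsClique (s : Set ((V ⊕ V) ⊕ Fin n))) :
    s.card ≤ G.cliqueNum ∨ ∃ t : Finset (Fin n), s = t.image Sum.inr := by
  classical
  rcases sum_clique_cases hs with h | h
  · left
    obtain ⟨t, ht, htc⟩ := cliquePull (A := G ⊕g G) (Sum.inl : (V ⊕ V) → (V ⊕ V) ⊕ Fin n) Sum.inl_injective
      (fun a b hab => by simpa using hab) hs
      (fun x hx => by obtain ⟨a, rfl⟩ := h x hx; exact ⟨a, rfl⟩)
    rw [← htc]
    rcases sum_clique_cases ht with h2 | h2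
    · obtain ⟨t2, ht2, ht2c⟩ := cliquePull (A := G) (Sum.inl : V → V ⊕ V) Sum.inl_injective
        (fun a b hab => by simpa using hab) ht
        (fun x hx => by obtain ⟨a, rfl⟩ := h2 x hx; exact ⟨a, rfl⟩)
      rw [← ht2c]
      exact ht2.card_le_cliqueNum
    · obtain ⟨t2, ht2, ht2c⟩ := cliquePull (A := G) (Sum.inr : V → V ⊕ V) Sum.inr_injective
        (fun a b hab => by simpa using hab) ht
        (fun x hx => by obtain ⟨a, rfl⟩ := h2 x hx; exact ⟨a, rfl⟩)
      rw [← ht2c]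
      exact ht2.card_le_cliqueNum
  · right
    refine ⟨s.preimage Sum.inr Sum.inr_injective.injOn, ?_⟩
    ext x
    simp only [Finset.mem_image, Finset.mem_preimage]
    constructor
    · intro hx; obtain ⟨b, rfl⟩ := h x hx; exact ⟨b, hx, rfl⟩
    · rintro ⟨b, hb, rfl⟩; exact hb

end helpers

/-- Let `G' = 2G ⊕ K_{ℓ+1}` (disjoint union of two copies of `G` and a complete
graph on `ℓ + 1` vertices), for `ℓ ≥ 1`. Then `ω(G) ≤ ℓ` iff some edge of `G'` can be
contracted so that the clique number drops, i.e. there is an edge `e` of `G'` with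
`ω(G'/e) ≤ ω(G') - 1`. -/
theorem stmt16 {V : Type*} [Fintype V] (G : SimpleGraph V) (ℓ : ℕ) (hℓ : 1 ≤ ℓ) :
    G.cliqueNum ≤ ℓ ↔
      ∃ u v : (V ⊕ V) ⊕ Fin (ℓ + 1),
        ((G ⊕g G) ⊕g completeGraph (Fin (ℓ + 1))).Adj u v ∧
        (((G ⊕g G) ⊕g completeGraph (Fin (ℓ + 1))).contractEdge u v).cliqueNum ≤
          ((G ⊕g G) ⊕g completeGraph (Fin (ℓ + 1))).cliqueNum - 1 := by
  classical
  -- the complete part gives a clique of size `ℓ + 1` in `G'`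
  have hge' : ℓ + 1 ≤ ((G ⊕g G) ⊕g completeGraph (Fin (ℓ + 1))).cliqueNum := by
    have huniv : (completeGraph (Fin (ℓ + 1))).IsClique
        ((Finset.univ : Finset (Fin (ℓ + 1))) : Set (Fin (ℓ + 1))) :=
      fun a _ b _ hne => hne
    have hclq := cliquePush (B := (G ⊕g G) ⊕g completeGraph (Fin (ℓ + 1)))
      (Sum.inr : Fin (ℓ + 1) → (V ⊕ V) ⊕ Fin (ℓ + 1)) Sum.inr_injective (fun a b hab => by simpa using hab) huniv
    calc ℓ + 1 = ((Finset.univ : Finset (Fin (ℓ + 1))).image Sum.inr).card := by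
          rw [Finset.card_image_of_injective _ Sum.inr_injective, Finset.card_univ,
            Fintype.card_fin]
      _ ≤ _ := hclq.card_le_cliqueNum
  constructor
  · intro hω
    have h01 : (0 : Fin (ℓ + 1)) ≠ 1 := by
      have h2 : (1 : ℕ) < ℓ + 1 := by omega
      simp [Fin.ext_iff, Fin.val_one', Nat.mod_eq_of_lt h2]
    refine ⟨Sum.inr 0, Sum.inr 1, ?_, ?_⟩
    · simpa [completeGraph] using h01
    · -- clique number of `G'` is `ℓ + 1`
      have hle' : ((G ⊕g G) ⊕g completeGraph (Fin (ℓ + 1))).cliqueNum ≤ ℓ + 1 := by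
        apply csSup_le'
        rintro n ⟨s, hclq, hcard⟩
        subst hcard
        rcases hub_aux G hclq with h | ⟨t, rfl⟩
        · omega
        · calc (t.image Sum.inr).card = t.card :=
              Finset.card_image_of_injective _ Sum.inr_injective
            _ ≤ ℓ + 1 := by
              simpa using Finset.card_le_univ t
      have hEq : ((G ⊕g G) ⊕g completeGraph (Fin (ℓ + 1))).cliqueNum = ℓ + 1 :=
        le_antisymm hle' hge'
      rw [hEq]
      -- now bound the clique number of the contraction by `ℓ`
      have himp : ∀ x y : {x : (V ⊕ V) ⊕ Fin (ℓ + 1) // x ≠ Sum.inr 0},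
          (((G ⊕g G) ⊕g completeGraph (Fin (ℓ + 1))).contractEdge (Sum.inr 0) (Sum.inr 1)).Adj x y →
          ((G ⊕g G) ⊕g completeGraph (Fin (ℓ + 1))).Adj x.1 y.1 := by
        have main : ∀ x y : {x : (V ⊕ V) ⊕ Fin (ℓ + 1) // x ≠ Sum.inr 0},
            x ≠ y → x.1 = Sum.inr 1 →
            ((G ⊕g G) ⊕g completeGraph (Fin (ℓ + 1))).Adj (Sum.inr 0) y.1 →
            ((G ⊕g G) ⊕g completeGraph (Fin (ℓ + 1))).Adj x.1 y.1 := by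
          rintro x ⟨(w | j), hy0⟩ hne hx hadj0
          · simp at hadj0
          · have hvalne : x.1 ≠ Sum.inr j := fun h => hne (Subtype.ext (by simp [h]))
            rw [hx] at hvalne ⊢
            have : (1 : Fin (ℓ + 1)) ≠ j := fun h => hvalne (by rw [h])
            simpa [completeGraph] using this
        rintro x y ⟨hne, h | ⟨hx, hy⟩ | ⟨hy, hx⟩⟩
        · exact h
        · exact main x y hne hx hy
        · exact (main y x hne.symm hy hx).symm
      apply csSup_le'
      rintro n ⟨s, hclq, hcard⟩
      subst hcard
      have hvclq := cliquePush Subtype.val Subtype.val_injective himp hclq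
      have hcard2 : (s.image Subtype.val).card = s.card :=
        Finset.card_image_of_injective _ Subtype.val_injective
      rcases hub_aux G hvclq with h | ⟨t, ht⟩
      · omega
      · have h0 : (0 : Fin (ℓ + 1)) ∉ t := by
          intro h0
          have hmem : (Sum.inr (0 : Fin (ℓ + 1)) : (V ⊕ V) ⊕ Fin (ℓ + 1)) ∈
              s.image Subtype.val := ht ▸ Finset.mem_image_of_mem _ h0
          obtain ⟨x, _, hxv⟩ := Finset.mem_image.mp hmem
          exact x.2 hxv
        have htsub : t ⊆ (Finset.univ : Finset (Fin (ℓ + 1))).erase 0 := fun x hx =>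
          Finset.mem_erase.mpr ⟨fun h => h0 (h ▸ hx), Finset.mem_univ x⟩
        have htcard : t.card ≤ ℓ := by
          have := Finset.card_le_card htsub
          simpa [Finset.card_erase_of_mem] using this
        have : (s.image Subtype.val).card = t.card := by
          rw [ht, Finset.card_image_of_injective _ Sum.inr_injective]
        omega
  · rintro ⟨u, v, hadj, hle⟩
    by_contra hG
    push_neg at hG
    haveI : Fintype {x : (V ⊕ V) ⊕ Fin (ℓ + 1) // x ≠ u} := Fintype.ofFinite _
    obtain ⟨s0, hs0⟩ := G.exists_isNClique_cliqueNum
    -- the clique number of `G'` is at most `ω(G)`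
    have hupper : ((G ⊕g G) ⊕g completeGraph (Fin (ℓ + 1))).cliqueNum ≤ G.cliqueNum := by
      apply csSup_le'
      rintro n ⟨s, hclq, hcard⟩
      subst hcard
      rcases hub_aux G hclq with h | ⟨t, rfl⟩
      · exact h
      · calc (t.image Sum.inr).card = t.card :=
            Finset.card_image_of_injective _ Sum.inr_injective
          _ ≤ ℓ + 1 := by simpa using Finset.card_le_univ t
          _ ≤ G.cliqueNum := hG
    -- the contraction still contains an untouched copy of `G`
    have key : ∃ f : V → (V ⊕ V) ⊕ Fin (ℓ + 1), Function.Injective f ∧ (∀ a, f a ≠ u) ∧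
        ∀ a b, G.Adj a b → ((G ⊕g G) ⊕g completeGraph (Fin (ℓ + 1))).Adj (f a) (f b) := by
      match u with
      | Sum.inl (Sum.inl a) =>
        exact ⟨fun x => Sum.inl (Sum.inr x), fun x y h => by simpa using h,
          fun a => by simp, fun a b h => by simpa using h⟩
      | Sum.inl (Sum.inr a) =>
        exact ⟨fun x => Sum.inl (Sum.inl x), fun x y h => by simpa using h,
          fun a => by simp, fun a b h => by simpa using h⟩
      | Sum.inr j =>
        exact ⟨fun x => Sum.inl (Sum.inl x), fun x y h => by simpa using h,
          fun a => by simp, fun a b h => by simpa using h⟩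
    obtain ⟨f, hfinj, hfne, hfadj⟩ := key
    have hlow : G.cliqueNum ≤
        ((((G ⊕g G) ⊕g completeGraph (Fin (ℓ + 1))).contractEdge u v)).cliqueNum := by
      have hadj' : ∀ a b, G.Adj a b →
          ((((G ⊕g G) ⊕g completeGraph (Fin (ℓ + 1))).contractEdge u v)).Adj
            ⟨f a, hfne a⟩ ⟨f b, hfne b⟩ := fun a b h =>
        ⟨fun he => h.ne (hfinj (congrArg Subtype.val he)), Or.inl (hfadj a b h)⟩
      have hclq := cliquePush (fun x => (⟨f x, hfne x⟩ : {x : (V ⊕ V) ⊕ Fin (ℓ + 1) // x ≠ u}))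
        (fun x y h => hfinj (congrArg Subtype.val h)) hadj' hs0.isClique
      calc G.cliqueNum = s0.card := hs0.card_eq.symm
        _ = (s0.image fun x => (⟨f x, hfne x⟩ : {x : (V ⊕ V) ⊕ Fin (ℓ + 1) // x ≠ u})).card :=
          (Finset.card_image_of_injective _ (fun x y h => hfinj (congrArg Subtype.val h))).symm
        _ ≤ _ := hclq.card_le_cliqueNum
    omega
end

section
/- Let G be a 3P1-free finite simple graph on n vertices, and let d and k be integers with 0 ≤ d ≤ χ(G) and k ≥ 0. Then there exists a set S of at most k vertices of G such that χ(G − S) ≤ χ(G) − d if and only if k ≥ max(d, n + 2d − 2χ(G)) (the maximum taken over the integers). -/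
open SimpleGraph

universe u
variable {V : Type*} {W : Type*}

/-- The chromatic number of a (finite) graph as a natural number. -/
noncomputable def SimpleGraph.chromNum (G : SimpleGraph V) : ℕ :=
  G.chromaticNumber.toNat

set_option linter.unusedSectionVars false

section Aux
variable {V : Type*} [Fintype V]

lemma chromNum_colorable (G : SimpleGraph V) : G.Colorable G.chromNum :=
  G.colorable_chromaticNumber_of_fintype

lemma chromNum_le_of_colorable {G : SimpleGraph V} {m : ℕ} (h : G.Colorable m) :
    G.chromNum ≤ m :=
  ENat.toNat_le_of_le_coe h.chromaticNumber_le

lemma noInd3_of_free {V : Type*} (G : SimpleGraph V)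
    (hfree : ¬ (⊥ : SimpleGraph (Fin 3)).IsIndSubgraph G) :
    ∀ x y z : V, x ≠ y → x ≠ z → y ≠ z → G.Adj x y ∨ G.Adj x z ∨ G.Adj y z := by
  intro x y z hxy hxz hyz
  by_contra h
  push_neg at h
  obtain ⟨h1, h2, h3⟩ := h
  apply hfree
  refine ⟨⟨![x, y, z], ?_⟩, ?_⟩
  · intro a b hab
    fin_cases a <;> fin_cases b <;> simp_all
  · intro a b
    simp only [SimpleGraph.bot_adj, iff_false]
    change ¬ G.Adj (![x, y, z] a) (![x, y, z] b)
    fin_cases a <;> fin_cases b <;>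
      simp_all [Function.Embedding.coeFn_mk, G.adj_comm x y, G.adj_comm x z, G.adj_comm y z]

lemma card_le_two_mul_chromNum (G : SimpleGraph V)
    (h3 : ∀ x y z : V, x ≠ y → x ≠ z → y ≠ z → G.Adj x y ∨ G.Adj x z ∨ G.Adj y z) :
    Fintype.card V ≤ 2 * G.chromNum := by
  classical
  obtain ⟨C⟩ := chromNum_colorable G
  have key : Fintype.card V
      = ∑ i : Fin G.chromNum, (Finset.univ.filter (fun v => C v = i)).card := by
    rw [← Finset.card_univ]
    exact Finset.card_eq_sum_card_fiberwise (fun v _ => Finset.mem_univ _)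
  have hfib : ∀ i : Fin G.chromNum, (Finset.univ.filter (fun v => C v = i)).card ≤ 2 := by
    intro i
    by_contra hlt
    push_neg at hlt
    obtain ⟨a, b, c, ha, hb, hc, hab, hac, hbc⟩ := Finset.two_lt_card_iff.mp hlt
    simp only [Finset.mem_filter] at ha hb hc
    rcases h3 a b c hab hac hbc with hA | hA | hA
    · exact C.valid hA (ha.2.trans hb.2.symm)
    · exact C.valid hA (ha.2.trans hc.2.symm)
    · exact C.valid hA (hb.2.trans hc.2.symm)
  calc Fintype.card V = _ := key
    _ ≤ ∑ _i : Fin G.chromNum, 2 := Finset.sum_le_sum fun i _ => hfib i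
    _ = 2 * G.chromNum := by simp [mul_comm]

lemma chromNum_le_del (G : SimpleGraph V) (S : Set V) :
    G.chromNum ≤ (G.induce Sᶜ).chromNum + S.ncard := by
  classical
  obtain ⟨C⟩ := chromNum_colorable (G.induce Sᶜ)
  set c := (G.induce Sᶜ).chromNum with hc
  have col : G.Coloring (Fin c ⊕ S) := SimpleGraph.Coloring.mk
    (fun v => if h : v ∈ S then Sum.inr ⟨v, h⟩ else Sum.inl (C ⟨v, h⟩))
    (by
      intro u v huv
      split_ifs with hu hv hv
      · simp only [ne_eq, Sum.inr.injEq, Subtype.mk.injEq]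
        exact G.ne_of_adj huv
      · simp
      · simp
      · simp only [ne_eq, Sum.inl.injEq]
        exact C.valid huv)
  have hcol := col.colorable
  have hcard : Fintype.card (Fin c ⊕ S) = c + S.ncard := by
    rw [Fintype.card_sum, Fintype.card_fin, Set.ncard_eq_toFinset_card', Set.toFinset_card]
  rw [hcard] at hcol
  exact chromNum_le_of_colorable hcol

lemma select_classes {c d : ℕ} (hd : d ≤ c) (f : Fin c → ℕ) (hf : ∀ i, f i ≤ 2) :
    ∃ D : Finset (Fin c), D.card = d ∧
      ((∑ i ∈ D, f i) ≤ d ∨ (∑ i ∈ D, f i) + 2 * c ≤ (∑ i, f i) + 2 * d) := by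
  classical
  set A := Finset.univ.filter (fun i => f i ≤ 1) with hA
  by_cases hcase : d ≤ A.card
  · obtain ⟨D, hDA, hDcard⟩ := Finset.exists_subset_card_eq hcase
    refine ⟨D, hDcard, Or.inl ?_⟩
    calc ∑ i ∈ D, f i ≤ D.card • 1 :=
          Finset.sum_le_card_nsmul D f 1 (fun i hi => (Finset.mem_filter.mp (hDA hi)).2)
      _ = d := by simp [hDcard]
  · push_neg at hcase
    obtain ⟨D, hAD, hDu, hDcard⟩ := Finset.exists_subsuperset_card_eq (Finset.subset_univ A)
      hcase.le (by simpa using hd)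
    refine ⟨D, hDcard, Or.inr ?_⟩
    have h1 : ∑ i ∈ D \ A, f i + ∑ i ∈ A, f i = ∑ i ∈ D, f i := Finset.sum_sdiff hAD
    have h2 : ∑ i ∈ D \ A, f i ≤ (D \ A).card • 2 :=
      Finset.sum_le_card_nsmul _ f 2 (fun i _ => hf i)
    have hcs : (D \ A).card = d - A.card := by rw [Finset.card_sdiff_of_subset hAD, hDcard]
    have h3 : ∑ i ∈ Finset.univ \ A, f i + ∑ i ∈ A, f i = ∑ i, f i :=
      Finset.sum_sdiff (Finset.subset_univ A)
    have h4 : (Finset.univ \ A).card • 2 ≤ ∑ i ∈ Finset.univ \ A, f i := by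
      apply Finset.card_nsmul_le_sum
      intro i hi
      have := (Finset.mem_sdiff.mp hi).2
      simp only [hA, Finset.mem_filter, Finset.mem_univ, true_and, not_le] at this
      omega
    have hcu : (Finset.univ \ A).card = c - A.card := by
      rw [Finset.card_sdiff_of_subset (Finset.subset_univ A)]
      simp
    have hac : A.card ≤ c := by
      simpa using Finset.card_le_card (Finset.subset_univ A)
    simp only [smul_eq_mul, hcs, hcu] at h2 h4
    omega

end Aux


/-- For a `3P1`-free graph `G` on `n` vertices and integers `0 ≤ d ≤ χ(G)` and
`k ≥ 0`: there is a set `S` of at most `k` vertices with `χ(G - S) ≤ χ(G) - d` iff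
`k ≥ max(d, n + 2d - 2χ(G))` (maximum over the integers). -/
theorem stmt19 {V : Type*} [Fintype V] (G : SimpleGraph V) (n : ℕ) (hn : Fintype.card V = n)
    (hfree : ¬ (⊥ : SimpleGraph (Fin 3)).IsIndSubgraph G)
    (d k : ℕ) (hd : d ≤ G.chromNum) :
    (∃ S : Set V, S.ncard ≤ k ∧ (G.induce Sᶜ).chromNum ≤ G.chromNum - d) ↔
      max (d : ℤ) ((n : ℤ) + 2 * (d : ℤ) - 2 * (G.chromNum : ℤ)) ≤ (k : ℤ) := by
  classical
  have h3 := noInd3_of_free G hfree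
  rw [max_le_iff]
  constructor
  · rintro ⟨S, hScard, hchrom⟩
    have hdel := chromNum_le_del G S
    haveI : Fintype ↥(Sᶜ) := Set.Finite.fintype (Set.toFinite _)
    have h3' : ∀ x y z : ↥(Sᶜ), x ≠ y → x ≠ z → y ≠ z →
        (G.induce Sᶜ).Adj x y ∨ (G.induce Sᶜ).Adj x z ∨ (G.induce Sᶜ).Adj y z := by
      intro x y z hxy hxz hyz
      exact h3 x y z (Subtype.coe_ne_coe.mpr hxy) (Subtype.coe_ne_coe.mpr hxz)
        (Subtype.coe_ne_coe.mpr hyz)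
    have hcard2 := card_le_two_mul_chromNum (G.induce Sᶜ) h3'
    have hcc : (Sᶜ).ncard = Fintype.card ↥(Sᶜ) :=
      (Set.ncard_eq_toFinset_card' _).trans (Set.toFinset_card _)
    have hcompl : S.ncard + (Sᶜ).ncard = n := by
      rw [Set.ncard_add_ncard_compl, Nat.card_eq_fintype_card, hn]
    constructor
    · omega
    · omega
  · rintro ⟨hk1, hk2⟩
    obtain ⟨C⟩ := chromNum_colorable G
    set f : Fin G.chromNum → ℕ := fun i => (Finset.univ.filter (fun v => C v = i)).card with hf
    have hf2 : ∀ i, f i ≤ 2 := by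
      intro i
      by_contra hlt
      push_neg at hlt
      obtain ⟨a, b, c, ha, hb, hc, hab, hac, hbc⟩ := Finset.two_lt_card_iff.mp hlt
      simp only [Finset.mem_filter] at ha hb hc
      rcases h3 a b c hab hac hbc with hA | hA | hA
      · exact C.valid hA (ha.2.trans hb.2.symm)
      · exact C.valid hA (ha.2.trans hc.2.symm)
      · exact C.valid hA (hb.2.trans hc.2.symm)
    have hsum : ∑ i, f i = n := by
      rw [← hn, ← Finset.card_univ]
      exact (Finset.card_eq_sum_card_fiberwise (fun v _ => Finset.mem_univ (C v))).symm
    obtain ⟨D, hDcard, hDsum⟩ := select_classes hd f hf2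
    refine ⟨{v | C v ∈ D}, ?_, ?_⟩
    · have hset : {v | C v ∈ D}.ncard = ∑ i ∈ D, f i := by
        have hts : {v | C v ∈ D}.toFinset = Finset.univ.filter (fun v => C v ∈ D) := by
          ext v; simp
        rw [Set.ncard_eq_toFinset_card', hts,
          Finset.card_eq_sum_card_fiberwise (f := C) (s := Finset.univ.filter (fun v => C v ∈ D)) (t := D)
            (fun v hv => (Finset.mem_filter.mp hv).2)]
        refine Finset.sum_congr rfl fun i hi => ?_
        congr 1
        ext v
        simp only [Finset.mem_filter, Finset.mem_univ, true_and]
        constructor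
        · rintro ⟨_, h⟩; exact h
        · intro h; exact ⟨h ▸ hi, h⟩
      rw [hset]
      omega
    · have col : (G.induce {v | C v ∈ D}ᶜ).Coloring {i : Fin G.chromNum // i ∈ Dᶜ} :=
        SimpleGraph.Coloring.mk
          (fun v => ⟨C v.1, Finset.mem_compl.mpr v.2⟩)
          (by
            intro u v huv
            simp only [ne_eq, Subtype.mk.injEq]
            exact C.valid huv)
      have hcol := col.colorable
      have hcard : Fintype.card {i : Fin G.chromNum // i ∈ Dᶜ} = G.chromNum - d := by
        rw [Fintype.card_coe, Finset.card_compl, hDcard, Fintype.card_fin]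
      rw [hcard] at hcol
      exact chromNum_le_of_colorable hcol
end
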